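/- arXiv:1901.03774 — 5 statements merged into one kernel-verified Lean document; each statement's English description precedes it below -/
import Mathlib

section
/- Let B be a unital C*-algebra and let u, v ∈ B be unitaries. Then the Loring element e = e(u,v) satisfies, writing f = f(u), g = g(u), h = h(u): e² = e + [[h v g + g v* h, f(hv) − (hv)f], [(v*h)f − f(v*h), v* h² v − h²]] (a 2×2 block matrix over B). In particular, if u and v commute, then e(u,v)² = e(u,v). -/
open Complex

private lemma commute_of_mem_elemental {B : Type*} [CStarAlgebra B] {a b x : B}
    (h1 : Commute b a) (h2 : Commute b (star a))
    (hx : x ∈ StarAlgebra.elemental ℂ a) : Commute b x := by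
  induction hx using StarAlgebra.elemental.induction_on with
  | self => exact h1
  | star_self => exact h2
  | algebraMap r => exact (Algebra.commutes r b).symm
  | add u hu w hw pu pw => exact pu.add_right pw
  | mul u hu w hw pu pw => exact pu.mul_right pw
  | closure s hs hps w hw =>
    have hcl : IsClosed {x : B | Commute b x} :=
      isClosed_eq (continuous_const.mul continuous_id) (continuous_id.mul continuous_const)
    exact closure_minimal (fun u hu => hps u hu) hcl hw

private lemma cfc_mem_elemental' {B : Type*} [CStarAlgebra B] (f : ℂ → ℂ) (a : B)
    [ha : IsStarNormal a] : cfc f a ∈ StarAlgebra.elemental ℂ a := by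
  by_cases hf : ContinuousOn f (spectrum ℂ a)
  · rw [cfc_apply f a, cfcHom_eq_of_isStarNormal]
    simp only [StarAlgHom.comp_apply, StarSubalgebra.coe_subtype]
    exact SetLike.coe_mem _
  · rw [cfc_apply_of_not_continuousOn a hf]; exact zero_mem _

/-- Loring's identity for `e(u,v)²`: for unitaries `u, v` in a unital C*-algebra `B` and
Loring functions `f, g, h`, writing `f = f(u)` etc., one has
`e² = e + [[hvg + gv*h, f(hv) - (hv)f], [(v*h)f - f(v*h), v*h²v - h²]]`.
In particular, if `u` and `v` commute then `e(u,v)` is an idempotent. -/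
theorem loring_element_sq {B : Type*} [CStarAlgebra B]
    (f g h : ℂ → ℝ)
    (hf : ContinuousOn f (Metric.sphere (0 : ℂ) 1))
    (hg : ContinuousOn g (Metric.sphere (0 : ℂ) 1))
    (hh : ContinuousOn h (Metric.sphere (0 : ℂ) 1))
    (hrange : ∀ z : ℂ, ‖z‖ = 1 →
      f z ∈ Set.Icc (0 : ℝ) 1 ∧ g z ∈ Set.Icc (0 : ℝ) 1 ∧ h z ∈ Set.Icc (0 : ℝ) 1)
    (hsum : ∀ z : ℂ, ‖z‖ = 1 → (f z) ^ 2 + (g z) ^ 2 + (h z) ^ 2 = f z)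
    (hgh : ∀ z : ℂ, ‖z‖ = 1 → g z * h z = 0)
    (hf1 : f 1 = 1) (hg1 : g 1 = 0) (hh1 : h 1 = 0)
    (u v : B) (hu : u ∈ unitary B) (hv : v ∈ unitary B)
    (fu gu hu' : B)
    (hfu : fu = cfc (fun z : ℂ => (f z : ℂ)) u)
    (hgu : gu = cfc (fun z : ℂ => (g z : ℂ)) u)
    (hhu : hu' = cfc (fun z : ℂ => (h z : ℂ)) u)
    (e : Matrix (Fin 2) (Fin 2) B)
    (he : e = !![fu, gu + hu' * v; star v * hu' + gu, 1 - fu]) :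
    e * e = e +
      !![hu' * v * gu + gu * star v * hu',
           fu * (hu' * v) - (hu' * v) * fu;
         (star v * hu') * fu - fu * (star v * hu'),
           star v * hu' * hu' * v - hu' * hu'] ∧
    (u * v = v * u → e * e = e) := by
  obtain ⟨hu1, hu2⟩ := Unitary.mem_iff.mp hu
  obtain ⟨hv1, hv2⟩ := Unitary.mem_iff.mp hv
  have hunorm : IsStarNormal u := ⟨hu1.trans hu2.symm⟩
  have hspec : spectrum ℂ u ⊆ Metric.sphere 0 1 := spectrum.subset_circle_of_unitary hu
  have hnorm : ∀ z ∈ spectrum ℂ u, ‖z‖ = 1 := fun z hz => by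
    simpa using mem_sphere_zero_iff_norm.mp (hspec hz)
  have hfC : ContinuousOn (fun z : ℂ => (f z : ℂ)) (spectrum ℂ u) :=
    Complex.continuous_ofReal.comp_continuousOn (hf.mono hspec)
  have hgC : ContinuousOn (fun z : ℂ => (g z : ℂ)) (spectrum ℂ u) :=
    Complex.continuous_ofReal.comp_continuousOn (hg.mono hspec)
  have hhC : ContinuousOn (fun z : ℂ => (h z : ℂ)) (spectrum ℂ u) :=
    Complex.continuous_ofReal.comp_continuousOn (hh.mono hspec)
  -- commutation among functional calculus elements
  have hab : fu * gu = gu * fu := by rw [hfu, hgu]; exact cfc_commute_cfc _ _ u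
  have hac : fu * hu' = hu' * fu := by rw [hfu, hhu]; exact cfc_commute_cfc _ _ u
  have hbc0 : gu * hu' = 0 := by
    rw [hgu, hhu, ← cfc_mul _ _ u hgC hhC]
    have : spectrum ℂ u |>.EqOn (fun z => (g z : ℂ) * (h z : ℂ)) (fun _ => (0 : ℂ)) := by
      intro z hz
      have h1 := hgh z (hnorm z hz)
      show (↑(g z) * ↑(h z) : ℂ) = 0
      rw [← Complex.ofReal_mul, h1, Complex.ofReal_zero]
    rw [cfc_congr this, cfc_const_zero]
  have hcb0 : hu' * gu = 0 := by
    have : Commute gu hu' := by rw [hgu, hhu]; exact cfc_commute_cfc _ _ u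
    rw [← this.eq, hbc0]
  have hsum' : fu * fu + gu * gu + hu' * hu' = fu := by
    rw [hfu, hgu, hhu, ← cfc_mul _ _ u hfC hfC, ← cfc_mul _ _ u hgC hgC,
      ← cfc_mul _ _ u hhC hhC, ← cfc_add u (fun z => (f z : ℂ) * (f z : ℂ)) (fun z => (g z : ℂ) * (g z : ℂ)) (hfC.mul hfC) (hgC.mul hgC),
      ← cfc_add u (fun z => (f z : ℂ) * (f z : ℂ) + (g z : ℂ) * (g z : ℂ)) (fun z => (h z : ℂ) * (h z : ℂ)) ((hfC.mul hfC).add (hgC.mul hgC)) (hhC.mul hhC)]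
    apply cfc_congr
    intro z hz
    have h1 := hsum z (hnorm z hz)
    show (↑(f z) * ↑(f z) + ↑(g z) * ↑(g z) + ↑(h z) * ↑(h z) : ℂ) = ↑(f z)
    rw [← Complex.ofReal_mul, ← Complex.ofReal_mul, ← Complex.ofReal_mul,
      ← Complex.ofReal_add, ← Complex.ofReal_add, Complex.ofReal_inj]
    linear_combination h1
  -- the four entry identities
  have e00 : fu * fu + (gu + hu' * v) * (star v * hu' + gu) =
      fu + (hu' * v * gu + gu * star v * hu') := by
    have key : fu * fu + (gu + hu' * v) * (star v * hu' + gu) =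
        (fu + (hu' * v * gu + gu * star v * hu')) +
          ((fu * fu + gu * gu + hu' * hu' - fu) + hu' * (v * star v - 1) * hu') := by
      noncomm_ring
    rw [key, hsum', hv2, sub_self, sub_self, mul_zero, zero_mul, add_zero, add_zero]
  have e01 : fu * (gu + hu' * v) + (gu + hu' * v) * (1 - fu) =
      (gu + hu' * v) + (fu * (hu' * v) - (hu' * v) * fu) := by
    have key : fu * (gu + hu' * v) + (gu + hu' * v) * (1 - fu) =
        ((gu + hu' * v) + (fu * (hu' * v) - (hu' * v) * fu)) + (fu * gu - gu * fu) := by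
      noncomm_ring
    rw [key, hab, sub_self, add_zero]
  have e10 : (star v * hu' + gu) * fu + (1 - fu) * (star v * hu' + gu) =
      (star v * hu' + gu) + ((star v * hu') * fu - fu * (star v * hu')) := by
    have key : (star v * hu' + gu) * fu + (1 - fu) * (star v * hu' + gu) =
        ((star v * hu' + gu) + ((star v * hu') * fu - fu * (star v * hu'))) +
          (gu * fu - fu * gu) := by
      noncomm_ring
    rw [key, ← hab, sub_self, add_zero]
  have e11 : (star v * hu' + gu) * (gu + hu' * v) + (1 - fu) * (1 - fu) =
      (1 - fu) + (star v * hu' * hu' * v - hu' * hu') := by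
    have key : (star v * hu' + gu) * (gu + hu' * v) + (1 - fu) * (1 - fu) =
        ((1 - fu) + (star v * hu' * hu' * v - hu' * hu')) +
          (star v * (hu' * gu) + (gu * hu') * v +
            (fu * fu + gu * gu + hu' * hu' - fu)) := by
      noncomm_ring
    rw [key, hsum', hcb0, hbc0, sub_self, mul_zero, zero_mul, zero_add, zero_add, add_zero]
  have main : e * e = e +
      !![hu' * v * gu + gu * star v * hu',
           fu * (hu' * v) - (hu' * v) * fu;
         (star v * hu') * fu - fu * (star v * hu'),
           star v * hu' * hu' * v - hu' * hu'] := by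
    subst he
    ext i j
    fin_cases i <;> fin_cases j <;>
      simp [Matrix.mul_apply, Fin.sum_univ_two]
    · exact e00
    · exact e01
    · exact e10
    · exact e11
  refine ⟨main, fun hcomm => ?_⟩
  -- commutation part
  have hvu : Commute v u := (Commute.eq hcomm ▸ rfl : u * v = v * u).symm
  have hvsu : Commute v (star u) := by
    have : v * star u = star u * v := by
      calc v * star u = star u * (u * v) * star u := by
            rw [← mul_assoc, hu1, one_mul]
          _ = star u * (v * u) * star u := by rw [hcomm]
          _ = star u * v * (u * star u) := by noncomm_ring
          _ = star u * v := by rw [hu2, mul_one]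
    exact this
  have hsvu : Commute (star v) u := by
    have : star v * u = u * star v := by
      calc star v * u = star v * (u * v) * star v := by
            rw [mul_assoc, mul_assoc, hv2, mul_one]
          _ = star v * (v * u) * star v := by rw [hcomm]
          _ = (star v * v) * (u * star v) := by noncomm_ring
          _ = u * star v := by rw [hv1, one_mul]
    exact this
  have hsvsu : Commute (star v) (star u) := by
    have := congrArg star hcomm
    simp only [star_mul] at this
    exact this
  have hcomm_v : ∀ x : B, x ∈ StarAlgebra.elemental ℂ u → Commute v x :=
    fun x hx => commute_of_mem_elemental hvu hvsu hx
  have hcomm_sv : ∀ x : B, x ∈ StarAlgebra.elemental ℂ u → Commute (star v) x :=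
    fun x hx => commute_of_mem_elemental hsvu hsvsu hx
  have hvf : Commute v fu := hcomm_v fu (hfu ▸ cfc_mem_elemental' _ u)
  have hvg : Commute v gu := hcomm_v gu (hgu ▸ cfc_mem_elemental' _ u)
  have hvh : Commute v hu' := hcomm_v hu' (hhu ▸ cfc_mem_elemental' _ u)
  have hsvf : Commute (star v) fu := hcomm_sv fu (hfu ▸ cfc_mem_elemental' _ u)
  have hsvg : Commute (star v) gu := hcomm_sv gu (hgu ▸ cfc_mem_elemental' _ u)
  have hsvh : Commute (star v) hu' := hcomm_sv hu' (hhu ▸ cfc_mem_elemental' _ u)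
  have z00 : hu' * v * gu + gu * star v * hu' = 0 := by
    have t1 : hu' * v * gu = 0 := by
      calc hu' * v * gu = hu' * (v * gu) := by rw [mul_assoc]
        _ = hu' * (gu * v) := by rw [hvg.eq]
        _ = hu' * gu * v := by rw [mul_assoc]
        _ = 0 := by rw [hcb0, zero_mul]
    have t2 : gu * star v * hu' = 0 := by
      calc gu * star v * hu' = star v * gu * hu' := by rw [← hsvg.eq]
        _ = star v * (gu * hu') := by rw [mul_assoc]
        _ = 0 := by rw [hbc0, mul_zero]
    rw [t1, t2, add_zero]
  have z01 : fu * (hu' * v) - (hu' * v) * fu = 0 := by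
    have t : fu * (hu' * v) = (hu' * v) * fu := by
      calc fu * (hu' * v) = fu * hu' * v := by rw [mul_assoc]
        _ = hu' * fu * v := by rw [hac]
        _ = hu' * (fu * v) := by rw [mul_assoc]
        _ = hu' * (v * fu) := by rw [← hvf.eq]
        _ = hu' * v * fu := by rw [mul_assoc]
    rw [t, sub_self]
  have z10 : (star v * hu') * fu - fu * (star v * hu') = 0 := by
    have t : (star v * hu') * fu = fu * (star v * hu') := by
      calc star v * hu' * fu = star v * (hu' * fu) := by rw [mul_assoc]
        _ = star v * (fu * hu') := by rw [hac]
        _ = star v * fu * hu' := by rw [mul_assoc]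
        _ = fu * star v * hu' := by rw [hsvf.eq]
        _ = fu * (star v * hu') := by rw [mul_assoc]
    rw [t, sub_self]
  have z11 : star v * hu' * hu' * v - hu' * hu' = 0 := by
    have t : star v * hu' * hu' * v = hu' * hu' := by
      calc star v * hu' * hu' * v = star v * (hu' * hu' * v) := by
            rw [mul_assoc, mul_assoc, mul_assoc]
        _ = star v * (v * (hu' * hu')) := by rw [← (hvh.mul_right hvh).eq]
        _ = star v * v * (hu' * hu') := by rw [mul_assoc]
        _ = hu' * hu' := by rw [hv1, one_mul]
    rw [t, sub_self]
  rw [main]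
  have : (!![hu' * v * gu + gu * star v * hu',
           fu * (hu' * v) - (hu' * v) * fu;
         (star v * hu') * fu - fu * (star v * hu'),
           star v * hu' * hu' * v - hu' * hu'] : Matrix (Fin 2) (Fin 2) B) = 0 := by
    rw [z00, z01, z10, z11]
    ext i j
    fin_cases i <;> fin_cases j <;> simp
  rw [this, add_zero]
end

section
/- There exists δ > 0 such that for every unital C*-algebra B and all unitaries u, v ∈ B with ‖uv − vu‖ ≤ δ, the real number 1/2 does not belong to the spectrum of the self-adjoint element e(u,v) ∈ M₂(B). -/
open Complex

universe u

noncomputable section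
namespace LoringAux

local notation "𝕊" => Metric.sphere (0 : ℂ) 1

open scoped Classical in
def ext (φ : C(𝕊, ℂ)) : ℂ → ℂ := fun z => if hz : z ∈ 𝕊 then φ ⟨z, hz⟩ else 0

lemma ext_apply (φ : C(𝕊, ℂ)) {z : ℂ} (hz : z ∈ 𝕊) : ext φ z = φ ⟨z, hz⟩ := by
  unfold ext; rw [dif_pos hz]

lemma ext_continuousOn (φ : C(𝕊, ℂ)) : ContinuousOn (ext φ) 𝕊 := by
  rw [continuousOn_iff_continuous_restrict]
  convert φ.continuous using 1
  ext z
  exact ext_apply φ z.2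

variable {B : Type u} [CStarAlgebra B]

lemma isStarNormal_of_mem_unitary {u : B} (hu : u ∈ unitary B) : IsStarNormal u := by
  rw [Unitary.mem_iff] at hu
  exact ⟨by rw [Commute, SemiconjBy, hu.1, hu.2]⟩

lemma spec_subset {u : B} (hu : u ∈ unitary B) : spectrum ℂ u ⊆ 𝕊 :=
  spectrum.subset_circle_of_unitary hu

lemma ext_contOn_spec (φ : C(𝕊, ℂ)) {u : B} (hu : u ∈ unitary B) :
    ContinuousOn (ext φ) (spectrum ℂ u) :=
  (ext_continuousOn φ).mono (spec_subset hu)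

lemma norm_cfc_ext_le (φ : C(𝕊, ℂ)) {u : B} (hu : u ∈ unitary B) :
    ‖cfc (ext φ) u‖ ≤ ‖φ‖ := by
  refine norm_cfc_le (norm_nonneg φ) fun x hx => ?_
  rw [ext_apply φ (spec_subset hu hx)]
  exact φ.norm_coe_le_norm _

def P (φ : C(𝕊, ℂ)) : Prop :=
  ∀ ε > (0:ℝ), ∃ δ > (0:ℝ), ∀ (B : Type u) [CStarAlgebra B] [Nontrivial B], ∀ u v : B,
    u ∈ unitary B → v ∈ unitary B → ‖u * v - v * u‖ ≤ δ →
    ‖cfc (ext φ) u * v - v * cfc (ext φ) u‖ ≤ ε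

lemma ext_not_mem (φ : C(𝕊, ℂ)) {z : ℂ} (hz : z ∉ 𝕊) : ext φ z = 0 := by
  unfold ext; rw [dif_neg hz]

lemma ext_add (φ ψ : C(𝕊, ℂ)) : ext (φ + ψ) = fun z => ext φ z + ext ψ z := by
  funext z
  by_cases hz : z ∈ 𝕊
  · rw [ext_apply _ hz, ext_apply _ hz, ext_apply _ hz]; simp
  · rw [ext_not_mem _ hz, ext_not_mem _ hz, ext_not_mem _ hz]; simp

lemma ext_mul (φ ψ : C(𝕊, ℂ)) : ext (φ * ψ) = fun z => ext φ z * ext ψ z := by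
  funext z
  by_cases hz : z ∈ 𝕊
  · rw [ext_apply _ hz, ext_apply _ hz, ext_apply _ hz]; simp
  · rw [ext_not_mem _ hz, ext_not_mem _ hz, ext_not_mem _ hz]; simp

lemma ext_sub (φ ψ : C(𝕊, ℂ)) : ext (φ - ψ) = fun z => ext φ z - ext ψ z := by
  funext z
  by_cases hz : z ∈ 𝕊
  · rw [ext_apply _ hz, ext_apply _ hz, ext_apply _ hz]; simp
  · rw [ext_not_mem _ hz, ext_not_mem _ hz, ext_not_mem _ hz]; simp

lemma ext_star (φ : C(𝕊, ℂ)) : ext (star φ) = fun z => star (ext φ z) := by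
  funext z
  by_cases hz : z ∈ 𝕊
  · rw [ext_apply _ hz, ext_apply _ hz]; simp
  · rw [ext_not_mem _ hz, ext_not_mem _ hz]; simp

lemma P_add {φ ψ : C(𝕊, ℂ)} (hφ : P.{u} φ) (hψ : P.{u} ψ) : P.{u} (φ + ψ) := by
  intro ε hε
  obtain ⟨δ₁, hδ₁, H₁⟩ := hφ (ε/2) (by positivity)
  obtain ⟨δ₂, hδ₂, H₂⟩ := hψ (ε/2) (by positivity)
  refine ⟨min δ₁ δ₂, lt_min hδ₁ hδ₂, ?_⟩
  intro B iB nB u v hu hv hc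
  haveI : IsStarNormal u := isStarNormal_of_mem_unitary hu
  have h1 := H₁ B u v hu hv (hc.trans (min_le_left _ _))
  have h2 := H₂ B u v hu hv (hc.trans (min_le_right _ _))
  have key : cfc (ext (φ + ψ)) u = cfc (ext φ) u + cfc (ext ψ) u := by
    rw [ext_add]
    exact cfc_add u (ext φ) (ext ψ) (ext_contOn_spec φ hu) (ext_contOn_spec ψ hu)
  rw [key]
  have expand : (cfc (ext φ) u + cfc (ext ψ) u) * v - v * (cfc (ext φ) u + cfc (ext ψ) u)
      = (cfc (ext φ) u * v - v * cfc (ext φ) u) + (cfc (ext ψ) u * v - v * cfc (ext ψ) u) := by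
    noncomm_ring
  rw [expand]
  calc _ ≤ _ := norm_add_le _ _
    _ ≤ ε/2 + ε/2 := add_le_add h1 h2
    _ = ε := by ring

lemma P_mul {φ ψ : C(𝕊, ℂ)} (hφ : P.{u} φ) (hψ : P.{u} ψ) : P.{u} (φ * ψ) := by
  intro ε hε
  obtain ⟨δ₁, hδ₁, H₁⟩ := hφ (ε/(2*(‖ψ‖+1))) (by positivity)
  obtain ⟨δ₂, hδ₂, H₂⟩ := hψ (ε/(2*(‖φ‖+1))) (by positivity)
  refine ⟨min δ₁ δ₂, lt_min hδ₁ hδ₂, ?_⟩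
  intro B iB nB u v hu hv hc
  haveI : IsStarNormal u := isStarNormal_of_mem_unitary hu
  have h1 := H₁ B u v hu hv (hc.trans (min_le_left _ _))
  have h2 := H₂ B u v hu hv (hc.trans (min_le_right _ _))
  set A := cfc (ext φ) u with hA_def
  set A' := cfc (ext ψ) u with hA'_def
  have key : cfc (ext (φ * ψ)) u = A * A' := by
    rw [ext_mul]
    exact cfc_mul (ext φ) (ext ψ) u (ext_contOn_spec φ hu) (ext_contOn_spec ψ hu)
  rw [key]
  have expand : A * A' * v - v * (A * A') = A * (A' * v - v * A') + (A * v - v * A) * A' := by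
    noncomm_ring
  rw [expand]
  have hA : ‖A‖ ≤ ‖φ‖ := norm_cfc_ext_le φ hu
  have hA' : ‖A'‖ ≤ ‖ψ‖ := norm_cfc_ext_le ψ hu
  have b1 : ‖φ‖ * (ε/(2*(‖φ‖+1))) ≤ ε/2 := by
    rw [mul_comm, div_mul_eq_mul_div, div_le_div_iff₀ (by positivity) (by positivity)]
    nlinarith [norm_nonneg φ, hε.le]
  have b2 : (ε/(2*(‖ψ‖+1))) * ‖ψ‖ ≤ ε/2 := by
    rw [div_mul_eq_mul_div, div_le_div_iff₀ (by positivity) (by positivity)]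
    nlinarith [norm_nonneg ψ, hε.le]
  calc ‖A * (A' * v - v * A') + (A * v - v * A) * A'‖
      ≤ ‖A * (A' * v - v * A')‖ + ‖(A * v - v * A) * A'‖ := norm_add_le _ _
    _ ≤ ‖A‖ * ‖A' * v - v * A'‖ + ‖A * v - v * A‖ * ‖A'‖ :=
        add_le_add (norm_mul_le _ _) (norm_mul_le _ _)
    _ ≤ ‖φ‖ * (ε/(2*(‖φ‖+1))) + (ε/(2*(‖ψ‖+1))) * ‖ψ‖ :=
        add_le_add (mul_le_mul hA h2 (norm_nonneg _) (norm_nonneg φ))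
          (mul_le_mul h1 hA' (norm_nonneg _) (by positivity))
    _ ≤ ε/2 + ε/2 := add_le_add b1 b2
    _ = ε := by ring

lemma P_algebraMap (c : ℂ) : P.{u} (algebraMap ℂ C(𝕊, ℂ) c) := by
  intro ε hε
  refine ⟨1, one_pos, ?_⟩
  intro B iB nB u v hu hv _
  haveI : IsStarNormal u := isStarNormal_of_mem_unitary hu
  have key : cfc (ext (algebraMap ℂ C(𝕊, ℂ) c)) u = algebraMap ℂ B c := by
    have : cfc (ext (algebraMap ℂ C(𝕊, ℂ) c)) u = cfc (fun _ : ℂ => c) u := by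
      apply cfc_congr
      intro x hx
      rw [ext_apply _ (spec_subset hu hx)]
      simp [Algebra.algebraMap_eq_smul_one]
    rw [this, cfc_const c u]
  rw [key, Algebra.commutes, sub_self, norm_zero]
  positivity

lemma P_X : P.{u} (Polynomial.toContinuousMapOnAlgHom 𝕊 Polynomial.X) := by
  intro ε hε
  refine ⟨ε, hε, ?_⟩
  intro B iB nB u v hu hv hc
  haveI : IsStarNormal u := isStarNormal_of_mem_unitary hu
  have key : cfc (ext (Polynomial.toContinuousMapOnAlgHom 𝕊 Polynomial.X)) u = u := by
    have : cfc (ext (Polynomial.toContinuousMapOnAlgHom 𝕊 Polynomial.X)) u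
        = cfc (id : ℂ → ℂ) u := by
      apply cfc_congr
      intro x hx
      rw [ext_apply _ (spec_subset hu hx)]
      simp
    rw [this, cfc_id ℂ u]
  rw [key]
  exact hc

lemma P_star {φ : C(𝕊, ℂ)} (hφ : P.{u} φ) : P.{u} (star φ) := by
  intro ε hε
  obtain ⟨δ, hδ, H⟩ := hφ ε hε
  refine ⟨δ, hδ, ?_⟩
  intro B iB nB u v hu hv hc
  haveI : IsStarNormal u := isStarNormal_of_mem_unitary hu
  have hw : star v ∈ unitary B := Unitary.star_mem hv
  have hu1 : ‖u‖ = 1 := CStarRing.norm_of_mem_unitary hu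
  have hsu : ‖star u‖ = 1 := by rwa [norm_star]
  have hc' : ‖u * star v - star v * u‖ ≤ δ := by
    have e1 : u * star v - star v * u = star (v * star u - star u * v) := by
      simp [star_sub, star_mul]
    have e2 : v * star u - star u * v = star u * (u * v - v * u) * star u := by
      rw [Unitary.mem_iff] at hu
      symm
      calc star u * (u * v - v * u) * star u
          = (star u * u) * v * star u - star u * v * (u * star u) := by noncomm_ring
        _ = v * star u - star u * v := by rw [hu.1, hu.2]; noncomm_ring
    rw [e1, norm_star, e2]
    calc ‖star u * (u * v - v * u) * star u‖
        ≤ ‖star u * (u * v - v * u)‖ * ‖star u‖ := norm_mul_le _ _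
      _ ≤ ‖star u‖ * ‖u * v - v * u‖ * ‖star u‖ := by
          gcongr; exact norm_mul_le _ _
      _ = ‖u * v - v * u‖ := by rw [hsu]; ring
      _ ≤ δ := hc
  have h1 := H B u (star v) hu hw hc'
  have key : cfc (ext (star φ)) u = star (cfc (ext φ) u) := by
    rw [ext_star]
    exact cfc_star (ext φ) u
  rw [key]
  have e3 : star (cfc (ext φ) u) * v - v * star (cfc (ext φ) u)
      = - star (cfc (ext φ) u * star v - star v * cfc (ext φ) u) := by
    simp [star_sub, star_mul]
  rw [e3, norm_neg, norm_star]
  exact h1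

lemma P_closed : IsClosed {φ : C(𝕊, ℂ) | P.{u} φ} := by
  refine isClosed_of_closure_subset ?_
  intro φ hφ ε hε
  rw [Metric.mem_closure_iff] at hφ
  obtain ⟨ψ, hψS, hdist⟩ := hφ (ε/3) (by positivity)
  obtain ⟨δ, hδ, H⟩ := hψS (ε/3) (by positivity)
  refine ⟨δ, hδ, ?_⟩
  intro B iB nB u v hu hv hc
  haveI : IsStarNormal u := isStarNormal_of_mem_unitary hu
  have h1 := H B u v hu hv hc
  have hv1 : ‖v‖ = 1 := CStarRing.norm_of_mem_unitary hv
  set A := cfc (ext φ) u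
  set A' := cfc (ext ψ) u
  have hdiff : ‖A - A'‖ ≤ ε/3 := by
    have e1 : A - A' = cfc (ext (φ - ψ)) u := by
      rw [ext_sub]
      exact (cfc_sub (ext φ) (ext ψ) u (ext_contOn_spec φ hu) (ext_contOn_spec ψ hu)).symm
    rw [e1]
    calc ‖cfc (ext (φ - ψ)) u‖ ≤ ‖φ - ψ‖ := norm_cfc_ext_le _ hu
      _ = dist φ ψ := (dist_eq_norm φ ψ).symm
      _ ≤ ε/3 := hdist.le
  have expand : A * v - v * A = (A - A') * v - v * (A - A') + (A' * v - v * A') := by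
    noncomm_ring
  rw [expand]
  calc ‖(A - A') * v - v * (A - A') + (A' * v - v * A')‖
      ≤ ‖(A - A') * v - v * (A - A')‖ + ‖A' * v - v * A'‖ := norm_add_le _ _
    _ ≤ (‖(A - A') * v‖ + ‖v * (A - A')‖) + ε/3 := add_le_add (norm_sub_le _ _) h1
    _ ≤ (‖A - A'‖ * ‖v‖ + ‖v‖ * ‖A - A'‖) + ε/3 :=
        add_le_add (add_le_add (norm_mul_le _ _) (norm_mul_le _ _)) le_rfl
    _ ≤ (ε/3 * 1 + 1 * (ε/3)) + ε/3 := by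
        rw [hv1]
        gcongr <;> simp [hdiff]
    _ = ε := by ring

def T : StarSubalgebra ℂ C(𝕊, ℂ) where
  carrier := {φ : C(𝕊, ℂ) | P.{u} φ}
  mul_mem' := P_mul
  add_mem' := P_add
  algebraMap_mem' := P_algebraMap
  star_mem' := P_star

lemma P_all (φ : C(𝕊, ℂ)) : P.{u} φ := by
  have h1 : (polynomialFunctions 𝕊).starClosure.topologicalClosure = ⊤ :=
    polynomialFunctions.starClosure_topologicalClosure 𝕊
  have h2 : (polynomialFunctions 𝕊).starClosure ≤ T.{u} := by
    apply Subalgebra.starClosure_le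
    rw [polynomialFunctions.eq_adjoin_X]
    apply Algebra.adjoin_le
    rw [Set.singleton_subset_iff]
    exact P_X.{u}
  have h3 : (⊤ : StarSubalgebra ℂ C(𝕊, ℂ)) ≤ T.{u} := by
    rw [← h1]
    exact StarSubalgebra.topologicalClosure_minimal h2 P_closed.{u}
  exact h3 (by trivial)

end LoringAux
section Entries

variable {R : Type*} [Ring R]

lemma entry00 (F G H v Y : R) (hvY : v*Y = 1) (hGH : G*H = 0) (hHG : H*G = 0)
    (hsum : F*F + G*G + H*H = F) :
    F*F + (G + H*v)*(Y*H + G) - F = G*(Y*H - H*Y) + H*(v*G - G*v) := by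
  have h1 : H*v*(Y*H) = H*H := by rw [mul_assoc, ← mul_assoc v Y H, hvY, one_mul]
  have e1 : F*F + (G + H*v)*(Y*H + G) - F
      = (F*F + G*G + H*H - F) + G*(Y*H) + H*(v*G) + (H*v*(Y*H) - H*H) := by noncomm_ring
  rw [mul_sub G (Y*H) (H*Y), ← mul_assoc G H Y, hGH, mul_sub H (v*G) (G*v), ← mul_assoc H G v,
    hHG, e1, h1, hsum]
  noncomm_ring

lemma entry01 (F G H v : R) (hFG : F*G = G*F) (hFH : F*H = H*F) :
    F*(G + H*v) + (G + H*v)*(1 - F) - (G + H*v) = H*(F*v - v*F) := by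
  have e1 : F*(G + H*v) + (G + H*v)*(1 - F) - (G + H*v)
      = (F*G - G*F) + ((F*H)*v - H*(v*F)) := by noncomm_ring
  rw [e1, hFG, hFH]
  noncomm_ring

lemma entry10 (F G H Y : R) (hFG : F*G = G*F) (hFH : F*H = H*F) :
    (Y*H + G)*F + (1 - F)*(Y*H + G) - (Y*H + G) = (Y*F - F*Y)*H := by
  have e1 : (Y*H + G)*F + (1 - F)*(Y*H + G) - (Y*H + G)
      = (G*F - F*G) + (Y*(H*F) - (F*Y)*H) := by noncomm_ring
  rw [e1, hFG, ← hFH]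
  noncomm_ring

lemma entry11 (F G H v Y : R) (hYv : Y*v = 1) (hGH : G*H = 0) (hHG : H*G = 0)
    (hsum : F*F + G*G + H*H = F) :
    (Y*H + G)*(G + H*v) + (1 - F)*(1 - F) - (1 - F) = Y*((H*H)*v - v*(H*H)) := by
  have h2 : H*H = F - (F*F + G*G) := eq_sub_of_add_eq' hsum
  have e1 : (Y*H + G)*(G + H*v) + (1 - F)*(1 - F) - (1 - F)
      = Y*(H*G) + Y*((H*H)*v) + (G*H)*v + (G*G + (1-F)*(1-F) - (1-F)) := by noncomm_ring
  have key : G*G + (1-F)*(1-F) - (1-F) = -(H*H) := by rw [h2]; noncomm_ring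
  rw [mul_sub Y ((H*H)*v) (v*(H*H)), ← mul_assoc Y v (H*H), hYv, one_mul, e1, hGH, hHG, key]
  noncomm_ring

end Entries

section MatPart

attribute [local instance] Matrix.linftyOpNormedRing Matrix.linftyOpNormedAlgebra
  Matrix.linfty_opNormOneClass

variable {B : Type u} [CStarAlgebra B]

local instance piLpComplete : CompleteSpace (PiLp 1 fun _ : Fin 2 => B) :=
  inferInstance

local instance matCompleteSpace :
    @CompleteSpace (Matrix (Fin 2) (Fin 2) B) PseudoMetricSpace.toUniformSpace :=
  (inferInstance : CompleteSpace (Fin 2 → Fin 2 → B))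

lemma mat_norm_le {c : ℝ} (M : Matrix (Fin 2) (Fin 2) B)
    (h0 : ‖M 0 0‖ + ‖M 0 1‖ ≤ c) (h1 : ‖M 1 0‖ + ‖M 1 1‖ ≤ c) : ‖M‖ ≤ c := by
  have hc : 0 ≤ c := le_trans (by positivity) h0
  rw [Matrix.linfty_opNorm_def, ← Real.coe_toNNReal c hc, NNReal.coe_le_coe]
  refine Finset.sup_le fun i _ => ?_
  have : ∀ x y : B, ‖x‖ + ‖y‖ ≤ c → ‖x‖₊ + ‖y‖₊ ≤ c.toNNReal := by
    intro x y hxy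
    rw [← NNReal.coe_le_coe]
    push_cast
    rwa [Real.coe_toNNReal c hc]
  fin_cases i <;> rw [Fin.sum_univ_two]
  · exact this _ _ h0
  · exact this _ _ h1

lemma isUnit_of_sq {M : Type*} [Monoid M] (a : M) (hsq : IsUnit (a * a)) : IsUnit a := by
  obtain ⟨w, hw⟩ := hsq
  have hcomm : Commute a (w : M) := by
    rw [hw]; exact (Commute.refl a).mul_right (Commute.refl a)
  have hc2 : Commute a (↑w⁻¹ : M) := hcomm.units_inv_right
  refine ⟨⟨a, a * ↑w⁻¹, ?_, ?_⟩, rfl⟩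
  · rw [← mul_assoc, ← hw, w.mul_inv]
  · rw [hc2.eq, mul_assoc, ← hw, w.inv_mul]


lemma half_not_mem_spectrum [Nontrivial B]
    (F G H v : B) (hv : v ∈ unitary B)
    (hFG : F*G = G*F) (hFH : F*H = H*F) (hGH : G*H = 0) (hHG : H*G = 0)
    (hsumB : F*F + G*G + H*H = F)
    (hGn : ‖G‖ ≤ 1) (hHn : ‖H‖ ≤ 1)
    (hFv : ‖F*v - v*F‖ ≤ 1/13) (hGv : ‖G*v - v*G‖ ≤ 1/13) (hHv : ‖H*v - v*H‖ ≤ 1/13)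
    (hFY : ‖F*(star v) - (star v)*F‖ ≤ 1/13) (hGY : ‖G*(star v) - (star v)*G‖ ≤ 1/13)
    (hHY : ‖H*(star v) - (star v)*H‖ ≤ 1/13) :
    (1/2 : ℂ) ∉ spectrum ℂ (!![F, G + H*v; star v*H + G, 1 - F]) := by
  set Y := star v with hY
  have hmem := Unitary.mem_iff.mp hv
  have hYv : Y*v = 1 := hmem.1
  have hvY : v*Y = 1 := hmem.2
  set eM : Matrix (Fin 2) (Fin 2) B := !![F, G + H*v; Y*H + G, 1 - F] with heM
  -- the defect matrix
  set D : Matrix (Fin 2) (Fin 2) B :=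
    !![G*(Y*H - H*Y) + H*(v*G - G*v), H*(F*v - v*F);
       (Y*F - F*Y)*H, Y*((H*H)*v - v*(H*H))] with hD
  have hDeq : eM*eM - eM = D := by
    ext i j
    fin_cases i <;> fin_cases j <;>
      simp only [heM, hD, Matrix.sub_apply, Matrix.mul_apply, Fin.sum_univ_two,
        Matrix.cons_val', Matrix.cons_val_zero, Matrix.cons_val_one, Matrix.head_cons,
        Matrix.head_fin_const, Matrix.empty_val', Matrix.cons_val_fin_one]
    · exact entry00 F G H v Y hvY hGH hHG hsumB
    · exact entry01 F G H v hFG hFH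
    · exact entry10 F G H Y hFG hFH
    · exact entry11 F G H v Y hYv hGH hHG hsumB
  -- norm bound on D
  have hDnorm : ‖D‖ ≤ 3/13 := by
    have h00 : ‖G*(Y*H - H*Y) + H*(v*G - G*v)‖ ≤ 2/13 := by
      calc ‖G*(Y*H - H*Y) + H*(v*G - G*v)‖
          ≤ ‖G*(Y*H - H*Y)‖ + ‖H*(v*G - G*v)‖ := norm_add_le _ _
        _ ≤ ‖G‖*‖Y*H - H*Y‖ + ‖H‖*‖v*G - G*v‖ := add_le_add (norm_mul_le _ _) (norm_mul_le _ _)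
        _ ≤ 1*(1/13) + 1*(1/13) := by
            have e1 : ‖Y*H - H*Y‖ ≤ 1/13 := by rw [norm_sub_rev]; exact hHY
            have e2 : ‖v*G - G*v‖ ≤ 1/13 := by rw [norm_sub_rev]; exact hGv
            gcongr <;> first | assumption | positivity
        _ = 2/13 := by norm_num
    have h01 : ‖H*(F*v - v*F)‖ ≤ 1/13 := by
      calc ‖H*(F*v - v*F)‖ ≤ ‖H‖*‖F*v - v*F‖ := norm_mul_le _ _
        _ ≤ 1*(1/13) := by gcongr <;> first | assumption | positivity
        _ = 1/13 := by norm_num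
    have h10 : ‖(Y*F - F*Y)*H‖ ≤ 1/13 := by
      calc ‖(Y*F - F*Y)*H‖ ≤ ‖Y*F - F*Y‖*‖H‖ := norm_mul_le _ _
        _ ≤ (1/13)*1 := by
            have e1 : ‖Y*F - F*Y‖ ≤ 1/13 := by rw [norm_sub_rev]; exact hFY
            gcongr <;> first | assumption | positivity
        _ = 1/13 := by norm_num
    have h11 : ‖Y*((H*H)*v - v*(H*H))‖ ≤ 2/13 := by
      have hY1 : ‖Y‖ = 1 := by rw [hY, norm_star]; exact CStarRing.norm_of_mem_unitary hv
      have e1 : (H*H)*v - v*(H*H) = H*(H*v - v*H) + (H*v - v*H)*H := by noncomm_ring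
      calc ‖Y*((H*H)*v - v*(H*H))‖ ≤ ‖Y‖*‖(H*H)*v - v*(H*H)‖ := norm_mul_le _ _
        _ = ‖(H*H)*v - v*(H*H)‖ := by rw [hY1, one_mul]
        _ ≤ ‖H*(H*v - v*H)‖ + ‖(H*v - v*H)*H‖ := by rw [e1]; exact norm_add_le _ _
        _ ≤ ‖H‖*‖H*v - v*H‖ + ‖H*v - v*H‖*‖H‖ := add_le_add (norm_mul_le _ _) (norm_mul_le _ _)
        _ ≤ 1*(1/13) + (1/13)*1 := by gcongr <;> first | assumption | positivity
        _ = 2/13 := by norm_num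
    refine mat_norm_le D ?_ ?_ <;> simp only [hD, Matrix.cons_val', Matrix.cons_val_zero,
      Matrix.cons_val_one, Matrix.head_cons, Matrix.head_fin_const, Matrix.empty_val',
      Matrix.cons_val_fin_one]
    · calc _ ≤ 2/13 + 1/13 := add_le_add h00 h01
        _ ≤ (3:ℝ)/13 := by norm_num
    · calc _ ≤ 1/13 + 2/13 := add_le_add h10 h11
        _ ≤ (3:ℝ)/13 := by norm_num
  -- invertibility argument
  rw [spectrum.notMem_iff]
  set c2 : Matrix (Fin 2) (Fin 2) B := algebraMap ℂ _ ((1:ℂ)/2) with hc2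
  set a : Matrix (Fin 2) (Fin 2) B := c2 - eM with ha
  have hsq : a*a = algebraMap ℂ _ ((1:ℂ)/4) + (eM*eM - eM) := by
    have h2 : c2 * eM + c2 * eM = eM := by
      rw [hc2, ← add_mul, ← map_add (algebraMap ℂ (Matrix (Fin 2) (Fin 2) B))]; norm_num
    have h4 : c2 * c2 = algebraMap ℂ _ ((1:ℂ)/4) := by
      rw [hc2, ← map_mul (algebraMap ℂ (Matrix (Fin 2) (Fin 2) B))]; norm_num
    have comm : eM * c2 = c2 * eM := (Algebra.commutes _ _).symm
    calc (c2 - eM) * (c2 - eM)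
        = c2*c2 - eM*c2 - c2*eM + eM*eM := by noncomm_ring
      _ = algebraMap ℂ _ ((1:ℂ)/4) - (c2*eM + c2*eM) + eM*eM := by rw [h4, comm]; abel
      _ = _ := by rw [h2]; abel
  set x : Matrix (Fin 2) (Fin 2) B := algebraMap ℂ _ (-4:ℂ) * (eM*eM - eM) with hx
  have hxnorm : ‖x‖ < 1 := by
    calc ‖x‖ ≤ ‖algebraMap ℂ (Matrix (Fin 2) (Fin 2) B) (-4:ℂ)‖ * ‖eM*eM - eM‖ :=
          norm_mul_le _ _
      _ = 4 * ‖eM*eM - eM‖ := by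
          rw [norm_algebraMap' (Matrix (Fin 2) (Fin 2) B) (-4:ℂ)]
          norm_num
      _ ≤ 4 * (3/13) := by rw [hDeq]; gcongr
      _ < 1 := by norm_num
  have hfact : a*a = algebraMap ℂ _ ((1:ℂ)/4) * (1 - x) := by
    rw [hsq, hx, mul_sub, mul_one, ← mul_assoc, ← map_mul (algebraMap ℂ (Matrix (Fin 2) (Fin 2) B))]
    have h5 : (1/4:ℂ) * (-4) = -1 := by norm_num
    rw [h5, map_neg, map_one, neg_mul, one_mul, sub_neg_eq_add]
  have hunit : IsUnit (a*a) := by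
    rw [hfact]
    exact ((isUnit_iff_ne_zero.mpr (by norm_num : (1/4:ℂ) ≠ 0)).map
      (algebraMap ℂ (Matrix (Fin 2) (Fin 2) B))).mul (Units.oneSub x hxnorm).isUnit
  exact isUnit_of_sq a hunit


lemma comm_star_le {B : Type u} [CStarAlgebra B] [Nontrivial B] {u v : B}
    (hv : v ∈ unitary B) {δ : ℝ} (hc : ‖u * v - v * u‖ ≤ δ) :
    ‖u * star v - star v * u‖ ≤ δ := by
  have m := Unitary.mem_iff.mp hv
  have e1 : u * star v - star v * u = star v * (v*u - u*v) * star v := by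
    symm
    calc star v * (v*u - u*v) * star v
        = (star v * v) * (u * star v) - (star v * u) * (v * star v) := by noncomm_ring
      _ = u * star v - star v * u := by rw [m.1, m.2, one_mul, mul_one]
  have hv1 : ‖v‖ = 1 := CStarRing.norm_of_mem_unitary hv
  have hsv1 : ‖star v‖ = 1 := by rwa [norm_star]
  rw [e1]
  calc ‖star v * (v*u - u*v) * star v‖
      ≤ ‖star v * (v*u - u*v)‖ * ‖star v‖ := norm_mul_le _ _
    _ ≤ ‖star v‖ * ‖v*u - u*v‖ * ‖star v‖ := by gcongr; exact norm_mul_le _ _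
    _ = ‖v*u - u*v‖ := by rw [hsv1]; ring
    _ = ‖u*v - v*u‖ := norm_sub_rev _ _
    _ ≤ δ := hc

end MatPart


/-- There is a `δ > 0` such that for every unital C*-algebra `B` and all unitaries `u, v ∈ B`
with `‖uv - vu‖ ≤ δ`, the number `1/2` is not in the spectrum of the Loring element
`e(u,v) ∈ M₂(B)`. -/
theorem loring_element_spectrum_avoids_half
    (f g h : ℂ → ℝ)
    (hf : ContinuousOn f (Metric.sphere (0 : ℂ) 1))
    (hg : ContinuousOn g (Metric.sphere (0 : ℂ) 1))
    (hh : ContinuousOn h (Metric.sphere (0 : ℂ) 1))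
    (hrange : ∀ z : ℂ, ‖z‖ = 1 →
      f z ∈ Set.Icc (0 : ℝ) 1 ∧ g z ∈ Set.Icc (0 : ℝ) 1 ∧ h z ∈ Set.Icc (0 : ℝ) 1)
    (hsum : ∀ z : ℂ, ‖z‖ = 1 → (f z) ^ 2 + (g z) ^ 2 + (h z) ^ 2 = f z)
    (hgh : ∀ z : ℂ, ‖z‖ = 1 → g z * h z = 0)
    (hf1 : f 1 = 1) (hg1 : g 1 = 0) (hh1 : h 1 = 0) :
    ∃ δ > (0 : ℝ), ∀ (B : Type u) (_ : CStarAlgebra B), ∀ u v : B,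
      u ∈ unitary B → v ∈ unitary B → ‖u * v - v * u‖ ≤ δ →
      (1 / 2 : ℂ) ∉ spectrum ℂ
        (!![cfc (fun z : ℂ => (f z : ℂ)) u,
              cfc (fun z : ℂ => (g z : ℂ)) u + cfc (fun z : ℂ => (h z : ℂ)) u * v;
            star v * cfc (fun z : ℂ => (h z : ℂ)) u + cfc (fun z : ℂ => (g z : ℂ)) u,
              1 - cfc (fun z : ℂ => (f z : ℂ)) u] : Matrix (Fin 2) (Fin 2) B) := by
  classical
  set S := Metric.sphere (0 : ℂ) 1 with hS
  set φf : C(S, ℂ) := ⟨fun z => (f z.1 : ℂ),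
    Complex.continuous_ofReal.comp (continuousOn_iff_continuous_restrict.mp hf)⟩
    with hφf
  set φg : C(S, ℂ) := ⟨fun z => (g z.1 : ℂ),
    Complex.continuous_ofReal.comp (continuousOn_iff_continuous_restrict.mp hg)⟩
    with hφg
  set φh : C(S, ℂ) := ⟨fun z => (h z.1 : ℂ),
    Complex.continuous_ofReal.comp (continuousOn_iff_continuous_restrict.mp hh)⟩
    with hφh
  obtain ⟨δ₁, hδ₁, H₁⟩ := LoringAux.P_all.{u} φf (1/13) (by norm_num)
  obtain ⟨δ₂, hδ₂, H₂⟩ := LoringAux.P_all.{u} φg (1/13) (by norm_num)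
  obtain ⟨δ₃, hδ₃, H₃⟩ := LoringAux.P_all.{u} φh (1/13) (by norm_num)
  refine ⟨min δ₁ (min δ₂ δ₃), lt_min hδ₁ (lt_min hδ₂ hδ₃), ?_⟩
  intro B iB u v hu hv hc
  rcases subsingleton_or_nontrivial B with hB | hB
  · rw [spectrum.notMem_iff]
    exact isUnit_of_subsingleton _
  haveI : IsStarNormal u := LoringAux.isStarNormal_of_mem_unitary hu
  have hc1 : ‖u * v - v * u‖ ≤ δ₁ := hc.trans (min_le_left _ _)
  have hc2 : ‖u * v - v * u‖ ≤ δ₂ := hc.trans ((min_le_right _ _).trans (min_le_left _ _))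
  have hc3 : ‖u * v - v * u‖ ≤ δ₃ := hc.trans ((min_le_right _ _).trans (min_le_right _ _))
  have hY1 : ‖u * star v - star v * u‖ ≤ δ₁ := comm_star_le hv hc1
  have hY2 : ‖u * star v - star v * u‖ ≤ δ₂ := comm_star_le hv hc2
  have hY3 : ‖u * star v - star v * u‖ ≤ δ₃ := comm_star_le hv hc3
  have hvY : star v ∈ unitary B := Unitary.star_mem hv
  set F := cfc (fun z : ℂ => (f z : ℂ)) u with hF
  set G := cfc (fun z : ℂ => (g z : ℂ)) u with hG
  set H := cfc (fun z : ℂ => (h z : ℂ)) u with hH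
  have hnorm1 : ∀ x ∈ spectrum ℂ u, ‖x‖ = 1 := fun x hx =>
    mem_sphere_zero_iff_norm.mp (LoringAux.spec_subset hu hx)
  have hfc : ContinuousOn (fun z : ℂ => (f z : ℂ)) (spectrum ℂ u) :=
    (Complex.continuous_ofReal.comp_continuousOn hf).mono (LoringAux.spec_subset hu)
  have hgc : ContinuousOn (fun z : ℂ => (g z : ℂ)) (spectrum ℂ u) :=
    (Complex.continuous_ofReal.comp_continuousOn hg).mono (LoringAux.spec_subset hu)
  have hhc : ContinuousOn (fun z : ℂ => (h z : ℂ)) (spectrum ℂ u) :=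
    (Complex.continuous_ofReal.comp_continuousOn hh).mono (LoringAux.spec_subset hu)
  have hextf : cfc (LoringAux.ext φf) u = F := by
    refine cfc_congr fun x hx => ?_
    rw [LoringAux.ext_apply _ (LoringAux.spec_subset hu hx), hφf]
    rfl
  have hextg : cfc (LoringAux.ext φg) u = G := by
    refine cfc_congr fun x hx => ?_
    rw [LoringAux.ext_apply _ (LoringAux.spec_subset hu hx), hφg]
    rfl
  have hexth : cfc (LoringAux.ext φh) u = H := by
    refine cfc_congr fun x hx => ?_
    rw [LoringAux.ext_apply _ (LoringAux.spec_subset hu hx), hφh]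
    rfl
  -- commutator bounds
  have hFv : ‖F*v - v*F‖ ≤ 1/13 := by rw [← hextf]; exact H₁ B u v hu hv hc1
  have hGv : ‖G*v - v*G‖ ≤ 1/13 := by rw [← hextg]; exact H₂ B u v hu hv hc2
  have hHv : ‖H*v - v*H‖ ≤ 1/13 := by rw [← hexth]; exact H₃ B u v hu hv hc3
  have hFY : ‖F*(star v) - (star v)*F‖ ≤ 1/13 := by
    rw [← hextf]; exact H₁ B u (star v) hu hvY hY1
  have hGY : ‖G*(star v) - (star v)*G‖ ≤ 1/13 := by
    rw [← hextg]; exact H₂ B u (star v) hu hvY hY2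
  have hHY : ‖H*(star v) - (star v)*H‖ ≤ 1/13 := by
    rw [← hexth]; exact H₃ B u (star v) hu hvY hY3
  -- algebraic identities
  have hFG : F*G = G*F := by
    rw [← cfc_mul _ _ u hfc hgc, ← cfc_mul _ _ u hgc hfc]
    exact cfc_congr fun x _ => mul_comm _ _
  have hFH : F*H = H*F := by
    rw [← cfc_mul _ _ u hfc hhc, ← cfc_mul _ _ u hhc hfc]
    exact cfc_congr fun x _ => mul_comm _ _
  have hGH : G*H = 0 := by
    rw [← cfc_mul _ _ u hgc hhc]
    have e : cfc (fun x : ℂ => (g x : ℂ) * (h x : ℂ)) u = cfc (fun _ : ℂ => (0:ℂ)) u := by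
      refine cfc_congr fun x hx => ?_
      have : (g x : ℂ) * (h x : ℂ) = ((g x * h x : ℝ) : ℂ) := by push_cast; ring
      rw [this, hgh x (hnorm1 x hx)]
      norm_num
    rw [e, cfc_const_zero ℂ u]
  have hHG : H*G = 0 := by
    rw [← cfc_mul _ _ u hhc hgc]
    have e : cfc (fun x : ℂ => (h x : ℂ) * (g x : ℂ)) u = cfc (fun _ : ℂ => (0:ℂ)) u := by
      refine cfc_congr fun x hx => ?_
      have : (h x : ℂ) * (g x : ℂ) = ((g x * h x : ℝ) : ℂ) := by push_cast; ring
      rw [this, hgh x (hnorm1 x hx)]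
      norm_num
    rw [e, cfc_const_zero ℂ u]
  have hsumB : F*F + G*G + H*H = F := by
    have e : F*F + G*G + H*H
        = cfc (fun x : ℂ => ((f x : ℂ)*(f x : ℂ) + (g x : ℂ)*(g x : ℂ)) + (h x : ℂ)*(h x : ℂ)) u := by
      rw [cfc_add u (fun x : ℂ => (f x : ℂ)*(f x : ℂ) + (g x : ℂ)*(g x : ℂ))
          (fun x : ℂ => (h x : ℂ)*(h x : ℂ)) ((hfc.mul hfc).add (hgc.mul hgc)) (hhc.mul hhc),
        cfc_add u (fun x : ℂ => (f x : ℂ)*(f x : ℂ)) (fun x : ℂ => (g x : ℂ)*(g x : ℂ)) (hfc.mul hfc) (hgc.mul hgc), cfc_mul _ _ u hfc hfc,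
        cfc_mul _ _ u hgc hgc, cfc_mul _ _ u hhc hhc]
    rw [e]
    refine cfc_congr fun x hx => ?_
    have hx1 := hnorm1 x hx
    calc (f x : ℂ)*(f x : ℂ) + (g x : ℂ)*(g x : ℂ) + (h x : ℂ)*(h x : ℂ)
        = ((f x ^ 2 + g x ^ 2 + h x ^ 2 : ℝ) : ℂ) := by push_cast; ring
      _ = (f x : ℂ) := by rw [hsum x hx1]
  -- norm bounds
  have hGn : ‖G‖ ≤ 1 := by
    refine norm_cfc_le zero_le_one fun x hx => ?_
    have hr := (hrange x (hnorm1 x hx)).2.1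
    rw [Complex.norm_real]
    exact abs_le.mpr ⟨by linarith [hr.1], hr.2⟩
  have hHn : ‖H‖ ≤ 1 := by
    refine norm_cfc_le zero_le_one fun x hx => ?_
    have hr := (hrange x (hnorm1 x hx)).2.2
    rw [Complex.norm_real]
    exact abs_le.mpr ⟨by linarith [hr.1], hr.2⟩
  exact half_not_mem_spectrum F G H v hv hFG hFH hGH hHG hsumB hGn hHn hFv hGv hHv hFY hGY hHY

end
end

section
/- There exists a constant C > 0 such that for all N ≥ 1, the Loring matrix e_N satisfies ‖e_N² − e_N‖ ≤ C/N, where ‖·‖ is the operator norm on 2N×2N complex matrices. -/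
open Complex Real

/-- The cyclic shift Voiculescu unitary `v_N`, with `v_N δ_k = δ_{k+1 mod N}`. -/
def voicV (N : ℕ) : Matrix (Fin N) (Fin N) ℂ :=
  Matrix.of fun i j => if (i : ℕ) = ((j : ℕ) + 1) % N then 1 else 0

/-- `f(u_N)`: the diagonal matrix `diag (f (e^{2πik/N}))_{k=0}^{N-1}`. -/
noncomputable def diagF (f : ℂ → ℝ) (N : ℕ) : Matrix (Fin N) (Fin N) ℂ :=
  Matrix.diagonal fun k => (f (Complex.exp (2 * Real.pi * Complex.I * k / N)) : ℂ)

/-- The Loring matrix `e_N` associated to the Voiculescu matrices `u_N, v_N`. -/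
noncomputable def loringMatrix (f g h : ℂ → ℝ) (N : ℕ) :
    Matrix (Fin N ⊕ Fin N) (Fin N ⊕ Fin N) ℂ :=
  Matrix.fromBlocks
    (diagF f N) (diagF g N + diagF h N * voicV N)
    ((voicV N).conjTranspose * diagF h N + diagF g N) (1 - diagF f N)

/-- The operator norm of a matrix acting on the standard Hermitian space. -/
noncomputable def matOpNorm {n : Type*} [Fintype n] [DecidableEq n]
    (M : Matrix n n ℂ) : ℝ :=
  ‖Matrix.toEuclideanCLM (𝕜 := ℂ) M‖


open Matrix

set_option linter.unusedSectionVars false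
set_option maxHeartbeats 1000000

lemma fin_add_one_val {N : ℕ} [NeZero N] (j : Fin N) : ((j + 1 : Fin N) : ℕ) = ((j : ℕ) + 1) % N := by
  rw [Fin.val_add, Fin.val_one', Nat.add_mod ((j:ℕ)) 1 N, Nat.mod_eq_of_lt j.isLt]

noncomputable def gridF (f : ℂ → ℝ) (N : ℕ) (k : Fin N) : ℝ :=
  f (Complex.exp (2 * Real.pi * Complex.I * (k : ℕ) / N))

lemma gridF_eq_circ (f : ℂ → ℝ) {N : ℕ} [NeZero N] (k : Fin N) :
    gridF f N k = (fun x : ℝ => f (Complex.exp (2 * Real.pi * Complex.I * x))) (((k : ℕ) : ℝ) / N) := by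
  have hN : (N : ℂ) ≠ 0 := Nat.cast_ne_zero.mpr (NeZero.ne N)
  unfold gridF
  congr 2
  push_cast
  ring

lemma gridF_norm_one {N : ℕ} [NeZero N] (k : Fin N) :
    ‖Complex.exp (2 * Real.pi * Complex.I * (k : ℕ) / N)‖ = 1 := by
  rw [show (2 * Real.pi * Complex.I * ((k : ℕ) : ℂ) / N : ℂ) =
    ((2 * Real.pi * ((k : ℕ) : ℝ) / N : ℝ) : ℂ) * Complex.I by push_cast; ring]
  exact Complex.norm_exp_ofReal_mul_I _

lemma gridF_step {φ : ℂ → ℝ} {K : NNReal}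
    (hLip : LipschitzOnWith K (fun x : ℝ => φ (Complex.exp (2 * Real.pi * Complex.I * x)))
      (Set.Icc (0 : ℝ) 1)) {N : ℕ} [NeZero N] (k : Fin N) :
    |gridF φ N (k + 1) - gridF φ N k| ≤ (K : ℝ) / N := by
  have hN : 0 < N := Nat.pos_of_ne_zero (NeZero.ne N)
  have hNR : (0 : ℝ) < N := by exact_mod_cast hN
  set ψ : ℝ → ℝ := fun x => φ (Complex.exp (2 * Real.pi * Complex.I * x)) with hψ
  have hkN : ((k : ℕ) : ℝ) + 1 ≤ N := by exact_mod_cast k.isLt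
  have h1 : gridF φ N k = ψ (((k : ℕ) : ℝ) / N) := gridF_eq_circ φ k
  have h2 : gridF φ N (k + 1) = ψ ((((k : ℕ) : ℝ) + 1) / N) := by
    rw [gridF_eq_circ φ (k + 1), fin_add_one_val]
    show ψ (((((k : ℕ) + 1) % N : ℕ) : ℝ) / N) = ψ ((((k : ℕ) : ℝ) + 1) / N)
    by_cases hc : (k : ℕ) + 1 < N
    · rw [Nat.mod_eq_of_lt hc]; congr 1; push_cast; ring
    · have hk : (k : ℕ) + 1 = N := by omega
      have e1 : ((((k : ℕ) : ℝ) + 1) / N) = 1 := by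
        rw [show (((k : ℕ) : ℝ) + 1) = (N : ℝ) by exact_mod_cast congrArg (Nat.cast (R := ℝ)) hk]
        field_simp
      rw [hk, Nat.mod_self, Nat.cast_zero, zero_div, e1]
      show φ _ = φ _
      congr 1
      simp [Complex.exp_two_pi_mul_I]
  rw [h1, h2]
  have hx : (((k : ℕ) : ℝ) + 1) / N ∈ Set.Icc (0 : ℝ) 1 := by
    constructor
    · positivity
    · rw [div_le_one hNR]; exact hkN
  have hy : ((k : ℕ) : ℝ) / N ∈ Set.Icc (0 : ℝ) 1 := by
    constructor
    · positivity
    · rw [div_le_one hNR]; linarith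
  have := hLip.dist_le_mul _ hx _ hy
  rw [Real.dist_eq, Real.dist_eq] at this
  calc |ψ ((((k : ℕ) : ℝ) + 1) / N) - ψ (((k : ℕ) : ℝ) / N)| ≤
      (K : ℝ) * |(((k : ℕ) : ℝ) + 1) / N - ((k : ℕ) : ℝ) / N| := this
    _ = (K : ℝ) / N := by
        rw [show (((k : ℕ) : ℝ) + 1) / N - ((k : ℕ) : ℝ) / N = 1 / N by field_simp; ring]
        rw [abs_of_pos (by positivity)]
        ring

def sdiag {n : Type*} [Fintype n] [DecidableEq n] (s : Equiv.Perm n) (d : n → ℂ) :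
    Matrix n n ℂ :=
  Matrix.of fun i j => if j = s i then d i else 0

lemma sdiag_mul {n : Type*} [Fintype n] [DecidableEq n] (s t : Equiv.Perm n) (d e : n → ℂ) :
    sdiag s d * sdiag t e = sdiag (s.trans t) (fun i => d i * e (s i)) := by
  ext i j
  simp only [sdiag, Matrix.mul_apply, Matrix.of_apply, ite_mul, mul_ite, zero_mul, mul_zero]
  rw [Finset.sum_eq_single (s i)]
  · simp [Equiv.trans_apply]; rfl
  · intro b _ hb; simp [hb]
  · simp

lemma sdiag_add {n : Type*} [Fintype n] [DecidableEq n] (s : Equiv.Perm n) (d e : n → ℂ) :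
    sdiag s d + sdiag s e = sdiag s (d + e) := by
  ext i j
  simp only [sdiag, Matrix.add_apply, Matrix.of_apply, Pi.add_apply]
  split <;> simp

lemma sdiag_sub {n : Type*} [Fintype n] [DecidableEq n] (s : Equiv.Perm n) (d e : n → ℂ) :
    sdiag s d - sdiag s e = sdiag s (d - e) := by
  ext i j
  simp only [sdiag, Matrix.sub_apply, Matrix.of_apply, Pi.sub_apply]
  split <;> simp

lemma sdiag_zero {n : Type*} [Fintype n] [DecidableEq n] (s : Equiv.Perm n) :
    sdiag s (0 : n → ℂ) = 0 := by
  ext i j; simp [sdiag]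

lemma diagonal_eq_sdiag {n : Type*} [Fintype n] [DecidableEq n] (d : n → ℂ) :
    Matrix.diagonal d = sdiag (Equiv.refl n) d := by
  ext i j
  simp [sdiag, Matrix.diagonal, eq_comm]

lemma one_eq_sdiag {n : Type*} [Fintype n] [DecidableEq n] :
    (1 : Matrix n n ℂ) = sdiag (Equiv.refl n) 1 := by
  rw [← Matrix.diagonal_one, diagonal_eq_sdiag]; rfl

lemma sdiag_congr {n : Type*} [Fintype n] [DecidableEq n] {s t : Equiv.Perm n} {d e : n → ℂ}
    (hst : ∀ i, s i = t i) (hde : ∀ i, d i = e i) : sdiag s d = sdiag t e := by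
  have h1 : s = t := Equiv.ext hst
  subst h1
  have : d = e := funext hde
  rw [this]

lemma voicV_eq {N : ℕ} [NeZero N] :
    voicV N = sdiag (Equiv.addRight (-1 : Fin N)) 1 := by
  ext i j
  simp only [voicV, sdiag, Matrix.of_apply, Equiv.coe_addRight]
  have : ((i : ℕ) = ((j : ℕ) + 1) % N) ↔ (j = i + -1) := by
    rw [← fin_add_one_val, ← Fin.ext_iff]
    constructor
    · intro hh; rw [hh]; simp
    · intro hh; rw [hh]; simp
  simp [this]; rfl

lemma voicV_conjTranspose {N : ℕ} [NeZero N] :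
    (voicV N)ᴴ = sdiag (Equiv.addRight (1 : Fin N)) 1 := by
  ext i j
  simp only [voicV, sdiag, Matrix.conjTranspose_apply, Matrix.of_apply, Equiv.coe_addRight]
  have : ((j : ℕ) = ((i : ℕ) + 1) % N) ↔ (j = i + 1) := by
    rw [← fin_add_one_val, ← Fin.ext_iff]
  by_cases hc : j = i + 1
  · rw [if_pos (this.mpr hc)]; simp [hc]
  · rw [if_neg (fun hh => hc (this.mp hh))]; simp [hc]


section Placement
variable {n : Type*} [Fintype n] [DecidableEq n]

lemma fromBlocks_sdiag_tl (s t : Equiv.Perm n) (d : n → ℂ) :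
    Matrix.fromBlocks (sdiag s d) 0 0 0 =
      sdiag (Equiv.sumCongr s t) (Sum.elim d 0) := by
  ext p q
  cases p <;> cases q <;> simp [sdiag, Matrix.fromBlocks]

lemma fromBlocks_sdiag_br (s t : Equiv.Perm n) (d : n → ℂ) :
    Matrix.fromBlocks 0 0 0 (sdiag t d) =
      sdiag (Equiv.sumCongr s t) (Sum.elim 0 d) := by
  ext p q
  cases p <;> cases q <;> simp [sdiag, Matrix.fromBlocks]

lemma fromBlocks_sdiag_tr (s t : Equiv.Perm n) (d : n → ℂ) :
    Matrix.fromBlocks 0 (sdiag s d) 0 0 =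
      sdiag ((Equiv.sumCongr s t).trans (Equiv.sumComm n n)) (Sum.elim d 0) := by
  ext p q
  cases p <;> cases q <;> simp [sdiag, Matrix.fromBlocks]

lemma fromBlocks_sdiag_bl (s t : Equiv.Perm n) (d : n → ℂ) :
    Matrix.fromBlocks 0 0 (sdiag t d) 0 =
      sdiag ((Equiv.sumCongr s t).trans (Equiv.sumComm n n)) (Sum.elim 0 d) := by
  ext p q
  cases p <;> cases q <;> simp [sdiag, Matrix.fromBlocks]

lemma fromBlocks_decomp (W X Y Z : Matrix n n ℂ) :
    Matrix.fromBlocks W X Y Z =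
      Matrix.fromBlocks W 0 0 0 + Matrix.fromBlocks 0 X 0 0 +
      Matrix.fromBlocks 0 0 Y 0 + Matrix.fromBlocks 0 0 0 Z := by
  ext p q
  cases p <;> cases q <;> simp [Matrix.fromBlocks]

end Placement

section Blocks
variable {N : ℕ} [NeZero N] (a b c : Fin N → ℝ)

local notation "rr" => Equiv.refl (Fin N)
local notation "rp" => Equiv.addRight (1 : Fin N)
local notation "rm" => Equiv.addRight (-1 : Fin N)

-- abbreviations for the complex diagonals
variable (A B C : Matrix (Fin N) (Fin N) ℂ)

lemma block_tl (hsum : ∀ i, a i ^ 2 + b i ^ 2 + c i ^ 2 = a i) :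
    sdiag rr ((↑) ∘ a) * sdiag rr ((↑) ∘ a) +
      (sdiag rr ((↑) ∘ b) + sdiag rm ((↑) ∘ c)) *
        (sdiag rp (fun i => (c (i + 1) : ℂ)) + sdiag rr ((↑) ∘ b)) -
      sdiag rr ((↑) ∘ a) =
    sdiag rp (fun i => (b i * c (i + 1) : ℝ)) + sdiag rm (fun i => (c i * b (i - 1) : ℝ)) := by
  have hmt : (Equiv.addRight (-1 : Fin N)).trans (Equiv.addRight (1 : Fin N)) = Equiv.refl (Fin N) := by
    ext i; simp
  rw [mul_add, add_mul, add_mul, sdiag_mul, sdiag_mul, sdiag_mul, sdiag_mul, sdiag_mul]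
  simp only [Function.comp_apply, Equiv.refl_apply, Equiv.coe_addRight, Equiv.refl_trans,
    Equiv.trans_refl, hmt, neg_add_cancel_right, Complex.ofReal_mul, ← sub_eq_add_neg,
    sub_add_cancel]
  have key : (sdiag (Equiv.refl (Fin N)) fun i => (a i : ℂ) * ↑(a i)) +
      ((sdiag (Equiv.refl (Fin N)) fun i => (c i : ℂ) * ↑(c i)) +
        (sdiag (Equiv.refl (Fin N)) fun i => (b i : ℂ) * ↑(b i))) -
      sdiag (Equiv.refl (Fin N)) (Complex.ofReal ∘ a) = 0 := by
    rw [sdiag_add, sdiag_add, sdiag_sub]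
    rw [show ((fun i => (a i : ℂ) * ↑(a i)) + ((fun i => (c i : ℂ) * ↑(c i)) +
        (fun i => (b i : ℂ) * ↑(b i))) - Complex.ofReal ∘ a) = (0 : Fin N → ℂ) from
      funext fun i => by
        have := hsum i
        simp only [Pi.sub_apply, Pi.add_apply, Function.comp_apply, Pi.zero_apply]
        norm_cast
        nlinarith [hsum i]]
    exact sdiag_zero _
  calc (sdiag (Equiv.refl (Fin N)) fun i => (a i : ℂ) * ↑(a i)) +
        (((sdiag (Equiv.addRight (1 : Fin N)) fun i => (b i : ℂ) * ↑(c (i + 1))) +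
            sdiag (Equiv.refl (Fin N)) fun i => (c i : ℂ) * ↑(c i)) +
          ((sdiag (Equiv.refl (Fin N)) fun i => (b i : ℂ) * ↑(b i)) +
            sdiag (Equiv.addRight (-1 : Fin N)) fun i => (c i : ℂ) * ↑(b (i - 1)))) -
        sdiag (Equiv.refl (Fin N)) (Complex.ofReal ∘ a)
      = ((sdiag (Equiv.refl (Fin N)) fun i => (a i : ℂ) * ↑(a i)) +
          ((sdiag (Equiv.refl (Fin N)) fun i => (c i : ℂ) * ↑(c i)) +
            (sdiag (Equiv.refl (Fin N)) fun i => (b i : ℂ) * ↑(b i))) -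
          sdiag (Equiv.refl (Fin N)) (Complex.ofReal ∘ a)) +
        ((sdiag (Equiv.addRight (1 : Fin N)) fun i => (b i : ℂ) * ↑(c (i + 1))) +
          sdiag (Equiv.addRight (-1 : Fin N)) fun i => (c i : ℂ) * ↑(b (i - 1))) := by abel
    _ = (sdiag (Equiv.addRight (1 : Fin N)) fun i => (b i : ℂ) * ↑(c (i + 1))) +
          sdiag (Equiv.addRight (-1 : Fin N)) fun i => (c i : ℂ) * ↑(b (i - 1)) := by
        rw [key, zero_add]

lemma block_tr :
    sdiag rr ((↑) ∘ a) * (sdiag rr ((↑) ∘ b) + sdiag rm ((↑) ∘ c)) +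
      (sdiag rr ((↑) ∘ b) + sdiag rm ((↑) ∘ c)) * (1 - sdiag rr ((↑) ∘ a)) -
      (sdiag rr ((↑) ∘ b) + sdiag rm ((↑) ∘ c)) =
    sdiag rm (fun i => ((c i * (a i - a (i - 1)) : ℝ) : ℂ)) := by
  rw [mul_sub, mul_one, mul_add, add_mul, sdiag_mul, sdiag_mul, sdiag_mul, sdiag_mul]
  simp only [Function.comp_apply, Equiv.refl_apply, Equiv.coe_addRight, Equiv.refl_trans,
    Equiv.trans_refl, ← sub_eq_add_neg]
  have key1 : (sdiag (Equiv.refl (Fin N)) fun i => (a i : ℂ) * ↑(b i)) -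
      (sdiag (Equiv.refl (Fin N)) fun i => (b i : ℂ) * ↑(a i)) = 0 := by
    rw [sdiag_sub, show ((fun i => (a i : ℂ) * ↑(b i)) - fun i => (b i : ℂ) * ↑(a i)) =
      (0 : Fin N → ℂ) from funext fun i => by simp [mul_comm]]
    exact sdiag_zero _
  have key2 : (sdiag (Equiv.addRight (-1 : Fin N)) fun i => (a i : ℂ) * ↑(c i)) -
      (sdiag (Equiv.addRight (-1 : Fin N)) fun i => (c i : ℂ) * ↑(a (i - 1))) =
      sdiag (Equiv.addRight (-1 : Fin N)) (fun i => ((c i * (a i - a (i - 1)) : ℝ) : ℂ)) := by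
    rw [sdiag_sub]
    exact sdiag_congr (fun _ => rfl) (fun i => by simp only [Pi.sub_apply]; push_cast; ring)
  calc ((sdiag (Equiv.refl (Fin N)) fun i => (a i : ℂ) * ↑(b i)) +
        sdiag (Equiv.addRight (-1 : Fin N)) fun i => (a i : ℂ) * ↑(c i)) +
        ((sdiag (Equiv.refl (Fin N)) ((↑) ∘ b) + sdiag (Equiv.addRight (-1 : Fin N)) ((↑) ∘ c)) -
          ((sdiag (Equiv.refl (Fin N)) fun i => (b i : ℂ) * ↑(a i)) +
            sdiag (Equiv.addRight (-1 : Fin N)) fun i => (c i : ℂ) * ↑(a (i - 1)))) -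
        (sdiag (Equiv.refl (Fin N)) ((↑) ∘ b) + sdiag (Equiv.addRight (-1 : Fin N)) ((↑) ∘ c))
      = ((sdiag (Equiv.refl (Fin N)) fun i => (a i : ℂ) * ↑(b i)) -
          (sdiag (Equiv.refl (Fin N)) fun i => (b i : ℂ) * ↑(a i))) +
        ((sdiag (Equiv.addRight (-1 : Fin N)) fun i => (a i : ℂ) * ↑(c i)) -
          (sdiag (Equiv.addRight (-1 : Fin N)) fun i => (c i : ℂ) * ↑(a (i - 1)))) := by abel
    _ = sdiag (Equiv.addRight (-1 : Fin N)) (fun i => ((c i * (a i - a (i - 1)) : ℝ) : ℂ)) := by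
        rw [key1, key2, zero_add]

lemma block_bl :
    (sdiag rp (fun i => (c (i + 1) : ℂ)) + sdiag rr ((↑) ∘ b)) * sdiag rr ((↑) ∘ a) +
      (1 - sdiag rr ((↑) ∘ a)) * (sdiag rp (fun i => (c (i + 1) : ℂ)) + sdiag rr ((↑) ∘ b)) -
      (sdiag rp (fun i => (c (i + 1) : ℂ)) + sdiag rr ((↑) ∘ b)) =
    sdiag rp (fun i => ((c (i + 1) * (a (i + 1) - a i) : ℝ) : ℂ)) := by
  rw [sub_mul, one_mul, add_mul, mul_add, sdiag_mul, sdiag_mul, sdiag_mul, sdiag_mul]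
  simp only [Function.comp_apply, Equiv.refl_apply, Equiv.coe_addRight, Equiv.refl_trans,
    Equiv.trans_refl]
  have key1 : (sdiag (Equiv.refl (Fin N)) fun i => (b i : ℂ) * ↑(a i)) -
      (sdiag (Equiv.refl (Fin N)) fun i => (a i : ℂ) * ↑(b i)) = 0 := by
    rw [sdiag_sub, show ((fun i => (b i : ℂ) * ↑(a i)) - fun i => (a i : ℂ) * ↑(b i)) =
      (0 : Fin N → ℂ) from funext fun i => by simp [mul_comm]]
    exact sdiag_zero _
  have key2 : (sdiag (Equiv.addRight (1 : Fin N)) fun i => (c (i + 1) : ℂ) * ↑(a (i + 1))) -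
      (sdiag (Equiv.addRight (1 : Fin N)) fun i => (a i : ℂ) * ↑(c (i + 1))) =
      sdiag (Equiv.addRight (1 : Fin N)) (fun i => ((c (i + 1) * (a (i + 1) - a i) : ℝ) : ℂ)) := by
    rw [sdiag_sub]
    exact sdiag_congr (fun _ => rfl) (fun i => by simp only [Pi.sub_apply]; push_cast; ring)
  calc ((sdiag (Equiv.addRight (1 : Fin N)) fun i => (c (i + 1) : ℂ) * ↑(a (i + 1))) +
        sdiag (Equiv.refl (Fin N)) fun i => (b i : ℂ) * ↑(a i)) +
        ((sdiag (Equiv.addRight (1 : Fin N)) (fun i => (c (i + 1) : ℂ)) +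
            sdiag (Equiv.refl (Fin N)) ((↑) ∘ b)) -
          ((sdiag (Equiv.addRight (1 : Fin N)) fun i => (a i : ℂ) * ↑(c (i + 1))) +
            sdiag (Equiv.refl (Fin N)) fun i => (a i : ℂ) * ↑(b i))) -
        (sdiag (Equiv.addRight (1 : Fin N)) (fun i => (c (i + 1) : ℂ)) +
          sdiag (Equiv.refl (Fin N)) ((↑) ∘ b))
      = ((sdiag (Equiv.refl (Fin N)) fun i => (b i : ℂ) * ↑(a i)) -
          (sdiag (Equiv.refl (Fin N)) fun i => (a i : ℂ) * ↑(b i))) +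
        ((sdiag (Equiv.addRight (1 : Fin N)) fun i => (c (i + 1) : ℂ) * ↑(a (i + 1))) -
          (sdiag (Equiv.addRight (1 : Fin N)) fun i => (a i : ℂ) * ↑(c (i + 1)))) := by abel
    _ = sdiag (Equiv.addRight (1 : Fin N)) (fun i => ((c (i + 1) * (a (i + 1) - a i) : ℝ) : ℂ)) := by
        rw [key1, key2, zero_add]

lemma block_br (hsum : ∀ i, a i ^ 2 + b i ^ 2 + c i ^ 2 = a i) (hbc : ∀ i, b i * c i = 0) :
    (sdiag rp (fun i => (c (i + 1) : ℂ)) + sdiag rr ((↑) ∘ b)) *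
        (sdiag rr ((↑) ∘ b) + sdiag rm ((↑) ∘ c)) +
      (1 - sdiag rr ((↑) ∘ a)) * (1 - sdiag rr ((↑) ∘ a)) -
      (1 - sdiag rr ((↑) ∘ a)) =
    sdiag rr (fun i => ((c (i + 1) ^ 2 - c i ^ 2 : ℝ) : ℂ)) := by
  have hpt : (Equiv.addRight (1 : Fin N)).trans (Equiv.addRight (-1 : Fin N)) =
      Equiv.refl (Fin N) := by
    ext i; simp
  rw [mul_sub, mul_one, sub_mul, one_mul, mul_add, add_mul, add_mul,
    sdiag_mul, sdiag_mul, sdiag_mul, sdiag_mul, sdiag_mul]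
  simp only [Function.comp_apply, Equiv.refl_apply, Equiv.coe_addRight, Equiv.refl_trans,
    Equiv.trans_refl, hpt, add_neg_cancel_right]
  have k1 : (sdiag (Equiv.addRight (1 : Fin N)) fun i => (c (i + 1) : ℂ) * ↑(b (i + 1))) = 0 := by
    rw [show (fun i => (c (i + 1) : ℂ) * ↑(b (i + 1))) = (0 : Fin N → ℂ) from
      funext fun i => by
        have := hbc (i + 1)
        norm_cast
        rw [mul_comm]
        simpa using this]
    exact sdiag_zero _
  have k4 : (sdiag (Equiv.addRight (-1 : Fin N)) fun i => (b i : ℂ) * ↑(c i)) = 0 := by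
    rw [show (fun i => (b i : ℂ) * ↑(c i)) = (0 : Fin N → ℂ) from
      funext fun i => by
        have := hbc i
        norm_cast
        simpa using this]
    exact sdiag_zero _
  have k5 : (sdiag (Equiv.refl (Fin N)) fun i => (c (i + 1) : ℂ) * ↑(c (i + 1))) +
      ((sdiag (Equiv.refl (Fin N)) fun i => (b i : ℂ) * ↑(b i)) +
        (sdiag (Equiv.refl (Fin N)) fun i => (a i : ℂ) * ↑(a i))) -
      sdiag (Equiv.refl (Fin N)) ((↑) ∘ a) =
      sdiag (Equiv.refl (Fin N)) (fun i => ((c (i + 1) ^ 2 - c i ^ 2 : ℝ) : ℂ)) := by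
    rw [sdiag_add, sdiag_add, sdiag_sub]
    refine sdiag_congr (fun _ => rfl) (fun i => ?_)
    simp only [Pi.sub_apply, Pi.add_apply, Function.comp_apply]
    norm_cast
    nlinarith [hsum i]
  calc ((sdiag (Equiv.addRight (1 : Fin N)) fun i => (c (i + 1) : ℂ) * ↑(b (i + 1))) +
        sdiag (Equiv.refl (Fin N)) fun i => (b i : ℂ) * ↑(b i)) +
        ((sdiag (Equiv.refl (Fin N)) fun i => (c (i + 1) : ℂ) * ↑(c (i + 1))) +
          sdiag (Equiv.addRight (-1 : Fin N)) fun i => (b i : ℂ) * ↑(c i)) +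
        (1 - sdiag (Equiv.refl (Fin N)) ((↑) ∘ a) -
          (sdiag (Equiv.refl (Fin N)) ((↑) ∘ a) -
            sdiag (Equiv.refl (Fin N)) fun i => (a i : ℂ) * ↑(a i))) -
        (1 - sdiag (Equiv.refl (Fin N)) ((↑) ∘ a))
      = ((sdiag (Equiv.refl (Fin N)) fun i => (c (i + 1) : ℂ) * ↑(c (i + 1))) +
          ((sdiag (Equiv.refl (Fin N)) fun i => (b i : ℂ) * ↑(b i)) +
            (sdiag (Equiv.refl (Fin N)) fun i => (a i : ℂ) * ↑(a i))) -
          sdiag (Equiv.refl (Fin N)) ((↑) ∘ a)) +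
        (sdiag (Equiv.addRight (1 : Fin N)) fun i => (c (i + 1) : ℂ) * ↑(b (i + 1))) +
        (sdiag (Equiv.addRight (-1 : Fin N)) fun i => (b i : ℂ) * ↑(c i)) := by abel
    _ = sdiag (Equiv.refl (Fin N)) (fun i => ((c (i + 1) ^ 2 - c i ^ 2 : ℝ) : ℂ)) := by
        rw [k1, k4, k5, add_zero, add_zero]

lemma fromBlocks_sub {n : Type*} (A B C D A' B' C' D' : Matrix n n ℂ) :
    Matrix.fromBlocks A B C D - Matrix.fromBlocks A' B' C' D' =
      Matrix.fromBlocks (A - A') (B - B') (C - C') (D - D') := by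
  ext p q
  cases p <;> cases q <;> simp [Matrix.fromBlocks]

lemma loring_decomp (hsum : ∀ i, a i ^ 2 + b i ^ 2 + c i ^ 2 = a i)
    (hbc : ∀ i, b i * c i = 0) :
    Matrix.fromBlocks (sdiag rr ((↑) ∘ a)) (sdiag rr ((↑) ∘ b) + sdiag rm ((↑) ∘ c))
        (sdiag rp (fun i => (c (i + 1) : ℂ)) + sdiag rr ((↑) ∘ b)) (1 - sdiag rr ((↑) ∘ a)) *
      Matrix.fromBlocks (sdiag rr ((↑) ∘ a)) (sdiag rr ((↑) ∘ b) + sdiag rm ((↑) ∘ c))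
        (sdiag rp (fun i => (c (i + 1) : ℂ)) + sdiag rr ((↑) ∘ b)) (1 - sdiag rr ((↑) ∘ a)) -
      Matrix.fromBlocks (sdiag rr ((↑) ∘ a)) (sdiag rr ((↑) ∘ b) + sdiag rm ((↑) ∘ c))
        (sdiag rp (fun i => (c (i + 1) : ℂ)) + sdiag rr ((↑) ∘ b)) (1 - sdiag rr ((↑) ∘ a)) =
      sdiag (Equiv.sumCongr rp rp) (Sum.elim (fun i => ((b i * c (i + 1) : ℝ) : ℂ)) 0) +
      sdiag (Equiv.sumCongr rm rm) (Sum.elim (fun i => ((c i * b (i - 1) : ℝ) : ℂ)) 0) +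
      sdiag ((Equiv.sumCongr rm rp).trans (Equiv.sumComm (Fin N) (Fin N)))
        (Sum.elim (fun i => ((c i * (a i - a (i - 1)) : ℝ) : ℂ)) 0) +
      sdiag ((Equiv.sumCongr rm rp).trans (Equiv.sumComm (Fin N) (Fin N)))
        (Sum.elim 0 (fun i => ((c (i + 1) * (a (i + 1) - a i) : ℝ) : ℂ))) +
      sdiag (Equiv.sumCongr rr rr) (Sum.elim 0 (fun i => ((c (i + 1) ^ 2 - c i ^ 2 : ℝ) : ℂ))) := by
  rw [Matrix.fromBlocks_multiply, fromBlocks_sub,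
    block_tl a b c hsum, block_tr a b c, block_bl a b c, block_br a b c hsum hbc]
  rw [show Matrix.fromBlocks
      (sdiag rp (fun i => ((b i * c (i + 1) : ℝ) : ℂ)) + sdiag rm (fun i => ((c i * b (i - 1) : ℝ) : ℂ)))
      (sdiag rm (fun i => ((c i * (a i - a (i - 1)) : ℝ) : ℂ)))
      (sdiag rp (fun i => ((c (i + 1) * (a (i + 1) - a i) : ℝ) : ℂ)))
      (sdiag rr (fun i => ((c (i + 1) ^ 2 - c i ^ 2 : ℝ) : ℂ))) =
      Matrix.fromBlocks (sdiag rp (fun i => ((b i * c (i + 1) : ℝ) : ℂ))) 0 0 0 +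
      Matrix.fromBlocks (sdiag rm (fun i => ((c i * b (i - 1) : ℝ) : ℂ))) 0 0 0 +
      Matrix.fromBlocks 0 (sdiag rm (fun i => ((c i * (a i - a (i - 1)) : ℝ) : ℂ))) 0 0 +
      Matrix.fromBlocks 0 0 (sdiag rp (fun i => ((c (i + 1) * (a (i + 1) - a i) : ℝ) : ℂ))) 0 +
      Matrix.fromBlocks 0 0 0 (sdiag rr (fun i => ((c (i + 1) ^ 2 - c i ^ 2 : ℝ) : ℂ))) from by
    ext p q
    cases p <;> cases q <;> simp [Matrix.fromBlocks]]
  rw [fromBlocks_sdiag_tl rp rp, fromBlocks_sdiag_tl rm rm,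
    fromBlocks_sdiag_tr rm rp, fromBlocks_sdiag_bl rm rp, fromBlocks_sdiag_br rr rr]

end Blocks


section NormLemmas
variable {n : Type*} [Fintype n] [DecidableEq n]

lemma matOpNorm_add_le (M M' : Matrix n n ℂ) :
    matOpNorm (M + M') ≤ matOpNorm M + matOpNorm M' := by
  unfold matOpNorm
  rw [map_add]
  exact norm_add_le _ _

lemma sdiag_opNorm_le (σ : Equiv.Perm n) (d : n → ℂ) {c : ℝ} (hc : 0 ≤ c)
    (hd : ∀ i, ‖d i‖ ≤ c) : matOpNorm (sdiag σ d) ≤ c := by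
  apply ContinuousLinearMap.opNorm_le_bound _ hc
  intro x
  rw [EuclideanSpace.norm_eq, EuclideanSpace.norm_eq]
  have hentry : ∀ i, (Matrix.toEuclideanCLM (𝕜 := ℂ) (sdiag σ d) x) i = d i * x (σ i) := by
    intro i
    show (Matrix.toLin' _ x) i = _
    simp [sdiag, Matrix.toLin'_apply, Matrix.mulVec, dotProduct, ite_mul]
  calc √(∑ i, ‖(Matrix.toEuclideanCLM (𝕜 := ℂ) (sdiag σ d) x) i‖ ^ 2)
      ≤ √(∑ i, c ^ 2 * ‖x (σ i)‖ ^ 2) := by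
        apply Real.sqrt_le_sqrt
        apply Finset.sum_le_sum
        intro i _
        rw [hentry i, norm_mul, mul_pow]
        gcongr
        exact hd i
    _ = c * √(∑ i, ‖x i‖ ^ 2) := by
        rw [← Finset.mul_sum, Real.sqrt_mul (by positivity), Real.sqrt_sq hc,
          Equiv.sum_comp σ (fun i => ‖x i‖ ^ 2)]

lemma matOpNorm_five_le (M1 M2 M3 M4 M5 : Matrix n n ℂ) {c1 c2 c3 c4 c5 : ℝ}
    (h1 : matOpNorm M1 ≤ c1) (h2 : matOpNorm M2 ≤ c2) (h3 : matOpNorm M3 ≤ c3)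
    (h4 : matOpNorm M4 ≤ c4) (h5 : matOpNorm M5 ≤ c5) :
    matOpNorm (M1 + M2 + M3 + M4 + M5) ≤ c1 + c2 + c3 + c4 + c5 := by
  calc matOpNorm (M1 + M2 + M3 + M4 + M5)
      ≤ matOpNorm (M1 + M2 + M3 + M4) + matOpNorm M5 := matOpNorm_add_le _ _
    _ ≤ (matOpNorm (M1 + M2 + M3) + matOpNorm M4) + matOpNorm M5 :=
        add_le_add (matOpNorm_add_le _ _) le_rfl
    _ ≤ ((matOpNorm (M1 + M2) + matOpNorm M3) + matOpNorm M4) + matOpNorm M5 :=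
        add_le_add (add_le_add (matOpNorm_add_le _ _) le_rfl) le_rfl
    _ ≤ (((matOpNorm M1 + matOpNorm M2) + matOpNorm M3) + matOpNorm M4) + matOpNorm M5 :=
        add_le_add (add_le_add (add_le_add (matOpNorm_add_le _ _) le_rfl) le_rfl) le_rfl
    _ ≤ c1 + c2 + c3 + c4 + c5 := by
        have := add_le_add (add_le_add (add_le_add (add_le_add h1 h2) h3) h4) h5
        linarith

end NormLemmas

lemma loring_eq (f g h : ℂ → ℝ) (N : ℕ) [NeZero N] :
    loringMatrix f g h N =
      Matrix.fromBlocks (sdiag (Equiv.refl (Fin N)) ((↑) ∘ gridF f N))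
        (sdiag (Equiv.refl (Fin N)) ((↑) ∘ gridF g N) +
          sdiag (Equiv.addRight (-1 : Fin N)) ((↑) ∘ gridF h N))
        (sdiag (Equiv.addRight (1 : Fin N)) (fun i => (gridF h N (i + 1) : ℂ)) +
          sdiag (Equiv.refl (Fin N)) ((↑) ∘ gridF g N))
        (1 - sdiag (Equiv.refl (Fin N)) ((↑) ∘ gridF f N)) := by
  have hd : ∀ φ : ℂ → ℝ, diagF φ N = sdiag (Equiv.refl (Fin N)) ((↑) ∘ gridF φ N) := fun φ => by
    rw [diagF, diagonal_eq_sdiag]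
    exact sdiag_congr (fun _ => rfl) (fun _ => rfl)
  unfold loringMatrix
  rw [hd f, hd g, hd h, voicV_conjTranspose, voicV_eq, sdiag_mul, sdiag_mul]
  have e1 : sdiag ((Equiv.refl (Fin N)).trans (Equiv.addRight (-1 : Fin N)))
      (fun i => ((↑) ∘ gridF h N) i * (1 : Fin N → ℂ) ((Equiv.refl (Fin N)) i)) =
      sdiag (Equiv.addRight (-1 : Fin N)) ((↑) ∘ gridF h N) :=
    sdiag_congr (fun i => rfl) (fun i => by simp)
  have e2 : sdiag ((Equiv.addRight (1 : Fin N)).trans (Equiv.refl (Fin N)))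
      (fun i => (1 : Fin N → ℂ) i * ((↑) ∘ gridF h N) ((Equiv.addRight (1 : Fin N)) i)) =
      sdiag (Equiv.addRight (1 : Fin N)) (fun i => (gridF h N (i + 1) : ℂ)) :=
    sdiag_congr (fun i => rfl) (fun i => by simp)
  rw [e1, e2]

/-- There is `C > 0` such that `‖e_N² - e_N‖ ≤ C/N` for all `N ≥ 1`. -/
theorem loring_matrix_almost_idempotent
    (f g h : ℂ → ℝ)
    (hf : ContinuousOn f (Metric.sphere (0 : ℂ) 1))
    (hg : ContinuousOn g (Metric.sphere (0 : ℂ) 1))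
    (hh : ContinuousOn h (Metric.sphere (0 : ℂ) 1))
    (hrange : ∀ z : ℂ, ‖z‖ = 1 →
      f z ∈ Set.Icc (0 : ℝ) 1 ∧ g z ∈ Set.Icc (0 : ℝ) 1 ∧ h z ∈ Set.Icc (0 : ℝ) 1)
    (hsum : ∀ z : ℂ, ‖z‖ = 1 → (f z) ^ 2 + (g z) ^ 2 + (h z) ^ 2 = f z)
    (hgh : ∀ z : ℂ, ‖z‖ = 1 → g z * h z = 0)
    (hf1 : f 1 = 1) (hg1 : g 1 = 0) (hh1 : h 1 = 0)
    (hfLip : ∃ K : NNReal,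
      LipschitzOnWith K (fun x : ℝ => f (Complex.exp (2 * Real.pi * Complex.I * x)))
        (Set.Icc (0 : ℝ) 1))
    (hgLip : ∃ K : NNReal,
      LipschitzOnWith K (fun x : ℝ => g (Complex.exp (2 * Real.pi * Complex.I * x)))
        (Set.Icc (0 : ℝ) 1))
    (hhLip : ∃ K : NNReal,
      LipschitzOnWith K (fun x : ℝ => h (Complex.exp (2 * Real.pi * Complex.I * x)))
        (Set.Icc (0 : ℝ) 1)) :
    ∃ C > (0 : ℝ), ∀ N : ℕ, 1 ≤ N →
      matOpNorm (loringMatrix f g h N * loringMatrix f g h N - loringMatrix f g h N) ≤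
        C / N := by
  obtain ⟨Kf, hKf⟩ := hfLip
  obtain ⟨Kh, hKh⟩ := hhLip
  refine ⟨2 * (Kf : ℝ) + 4 * (Kh : ℝ) + 1, by positivity, ?_⟩
  intro N hN1
  haveI : NeZero N := ⟨by omega⟩
  have hNR : (0 : ℝ) < N := by exact_mod_cast Nat.pos_of_ne_zero (NeZero.ne N)
  have hsum' : ∀ i : Fin N, gridF f N i ^ 2 + gridF g N i ^ 2 + gridF h N i ^ 2 = gridF f N i :=
    fun i => hsum _ (gridF_norm_one i)
  have hbc' : ∀ i : Fin N, gridF g N i * gridF h N i = 0 := fun i => hgh _ (gridF_norm_one i)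
  have hb1 : ∀ i : Fin N, |gridF g N i| ≤ 1 := fun i => by
    have h2 : gridF g N i ∈ Set.Icc (0 : ℝ) 1 := (hrange _ (gridF_norm_one (N := N) i)).2.1
    exact abs_le.mpr ⟨by linarith [h2.1], h2.2⟩
  have hc1 : ∀ i : Fin N, |gridF h N i| ≤ 1 := fun i => by
    have h2 : gridF h N i ∈ Set.Icc (0 : ℝ) 1 := (hrange _ (gridF_norm_one (N := N) i)).2.2
    exact abs_le.mpr ⟨by linarith [h2.1], h2.2⟩
  have stepA : ∀ k : Fin N, |gridF f N (k + 1) - gridF f N k| ≤ (Kf : ℝ) / N :=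
    fun k => gridF_step hKf k
  have stepC : ∀ k : Fin N, |gridF h N (k + 1) - gridF h N k| ≤ (Kh : ℝ) / N :=
    fun k => gridF_step hKh k
  rw [loring_eq f g h N, loring_decomp (gridF f N) (gridF g N) (gridF h N) hsum' hbc']
  have bound1 : matOpNorm (sdiag (Equiv.sumCongr (Equiv.addRight (1 : Fin N)) (Equiv.addRight (1 : Fin N)))
      (Sum.elim (fun i => ((gridF g N i * gridF h N (i + 1) : ℝ) : ℂ)) 0)) ≤ (Kh : ℝ) / N := by
    apply sdiag_opNorm_le _ _ (by positivity)
    rintro (i | i)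
    · rw [Sum.elim_inl, Complex.norm_real]
      rcases mul_eq_zero.mp (hbc' i) with h0 | h0
      · simp only [h0, Complex.ofReal_zero, Complex.ofReal_mul, zero_mul, mul_zero,
          norm_zero, abs_zero]; positivity
      · calc |gridF g N i * gridF h N (i + 1)|
            = |gridF g N i| * |gridF h N (i + 1)| := abs_mul _ _
          _ ≤ 1 * ((Kh : ℝ) / N) := by
              apply mul_le_mul (hb1 i) ?_ (abs_nonneg _) zero_le_one
              rw [show gridF h N (i + 1) = gridF h N (i + 1) - gridF h N i by rw [h0, sub_zero]]
              exact stepC i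
          _ = (Kh : ℝ) / N := one_mul _
    · simp only [Sum.elim_inr, Pi.zero_apply, norm_zero]; positivity
  have bound2 : matOpNorm (sdiag (Equiv.sumCongr (Equiv.addRight (-1 : Fin N)) (Equiv.addRight (-1 : Fin N)))
      (Sum.elim (fun i => ((gridF h N i * gridF g N (i - 1) : ℝ) : ℂ)) 0)) ≤ (Kh : ℝ) / N := by
    apply sdiag_opNorm_le _ _ (by positivity)
    rintro (i | i)
    · rw [Sum.elim_inl, Complex.norm_real]
      rcases mul_eq_zero.mp (hbc' (i - 1)) with h0 | h0
      · simp only [h0, Complex.ofReal_zero, Complex.ofReal_mul, zero_mul, mul_zero,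
          norm_zero, abs_zero]; positivity
      · calc |gridF h N i * gridF g N (i - 1)|
            = |gridF h N i| * |gridF g N (i - 1)| := abs_mul _ _
          _ ≤ ((Kh : ℝ) / N) * 1 := by
              apply mul_le_mul ?_ (hb1 _) (abs_nonneg _) (by positivity)
              rw [show gridF h N i = gridF h N ((i - 1) + 1) - gridF h N (i - 1) by
                rw [h0, sub_zero, sub_add_cancel]]
              exact stepC (i - 1)
          _ = (Kh : ℝ) / N := mul_one _
    · simp only [Sum.elim_inr, Pi.zero_apply, norm_zero]; positivity
  have bound3 : matOpNorm (sdiag ((Equiv.sumCongr (Equiv.addRight (-1 : Fin N))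
      (Equiv.addRight (1 : Fin N))).trans (Equiv.sumComm (Fin N) (Fin N)))
      (Sum.elim (fun i => ((gridF h N i * (gridF f N i - gridF f N (i - 1)) : ℝ) : ℂ)) 0)) ≤
      (Kf : ℝ) / N := by
    apply sdiag_opNorm_le _ _ (by positivity)
    rintro (i | i)
    · rw [Sum.elim_inl, Complex.norm_real]
      calc |gridF h N i * (gridF f N i - gridF f N (i - 1))|
          = |gridF h N i| * |gridF f N i - gridF f N (i - 1)| := abs_mul _ _
        _ ≤ 1 * ((Kf : ℝ) / N) := by
            apply mul_le_mul (hc1 i) ?_ (abs_nonneg _) zero_le_one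
            rw [show gridF f N i - gridF f N (i - 1) =
              gridF f N ((i - 1) + 1) - gridF f N (i - 1) by rw [sub_add_cancel]]
            exact stepA (i - 1)
        _ = (Kf : ℝ) / N := one_mul _
    · simp only [Sum.elim_inr, Pi.zero_apply, norm_zero]; positivity
  have bound4 : matOpNorm (sdiag ((Equiv.sumCongr (Equiv.addRight (-1 : Fin N))
      (Equiv.addRight (1 : Fin N))).trans (Equiv.sumComm (Fin N) (Fin N)))
      (Sum.elim 0 (fun i => ((gridF h N (i + 1) * (gridF f N (i + 1) - gridF f N i) : ℝ) : ℂ)))) ≤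
      (Kf : ℝ) / N := by
    apply sdiag_opNorm_le _ _ (by positivity)
    rintro (i | i)
    · simp only [Sum.elim_inl, Pi.zero_apply, norm_zero]; positivity
    · rw [Sum.elim_inr, Complex.norm_real]
      calc |gridF h N (i + 1) * (gridF f N (i + 1) - gridF f N i)|
          = |gridF h N (i + 1)| * |gridF f N (i + 1) - gridF f N i| := abs_mul _ _
        _ ≤ 1 * ((Kf : ℝ) / N) := mul_le_mul (hc1 _) (stepA i) (abs_nonneg _) zero_le_one
        _ = (Kf : ℝ) / N := one_mul _
  have bound5 : matOpNorm (sdiag (Equiv.sumCongr (Equiv.refl (Fin N)) (Equiv.refl (Fin N)))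
      (Sum.elim 0 (fun i => ((gridF h N (i + 1) ^ 2 - gridF h N i ^ 2 : ℝ) : ℂ)))) ≤
      2 * (Kh : ℝ) / N := by
    apply sdiag_opNorm_le _ _ (by positivity)
    rintro (i | i)
    · simp only [Sum.elim_inl, Pi.zero_apply, norm_zero]; positivity
    · rw [Sum.elim_inr, Complex.norm_real]
      calc |gridF h N (i + 1) ^ 2 - gridF h N i ^ 2|
          = |gridF h N (i + 1) + gridF h N i| * |gridF h N (i + 1) - gridF h N i| := by
            rw [← abs_mul, sq_sub_sq]
        _ ≤ 2 * ((Kh : ℝ) / N) := by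
            apply mul_le_mul ?_ (stepC i) (abs_nonneg _) (by norm_num)
            calc |gridF h N (i + 1) + gridF h N i|
                ≤ |gridF h N (i + 1)| + |gridF h N i| := abs_add_le _ _
              _ ≤ 2 := by linarith [hc1 (i + 1), hc1 i]
        _ = 2 * (Kh : ℝ) / N := by ring
  refine le_trans (matOpNorm_five_le _ _ _ _ _ bound1 bound2 bound3 bound4 bound5) ?_
  rw [show (Kh : ℝ) / N + (Kh : ℝ) / N + (Kf : ℝ) / N + (Kf : ℝ) / N + 2 * (Kh : ℝ) / N =
    (2 * (Kf : ℝ) + 4 * (Kh : ℝ)) / N by ring]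
  exact (div_le_div_iff_of_pos_right hNR).mpr (by linarith)
end

section
/- Let κ(N) denote the number of eigenvalues (with multiplicity) of the Hermitian matrix e_N lying in [1/2, ∞). Then lim_{N→∞} ( κ(N) − ( 3·tr(e_N²) − 2·tr(e_N³) ) ) = 0. -/
open Complex Real Filter

section Aux

open Matrix

lemma conj_pow_aux {n : Type*} [Fintype n] [DecidableEq n] (U D : Matrix n n ℂ)
    (h1 : star U * U = 1) (h2 : U * star U = 1) (k : ℕ) :
    (U * D * star U) ^ k = U * D ^ k * star U := by
  induction k with
  | zero => simp [pow_zero, h2]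
  | succ m ih =>
      rw [pow_succ, ih, pow_succ]
      simp only [Matrix.mul_assoc]
      rw [← Matrix.mul_assoc (star U) U, h1, Matrix.one_mul]

lemma trace_pow_eq {n : Type*} [Fintype n] [DecidableEq n] {A : Matrix n n ℂ}
    (hA : A.IsHermitian) (k : ℕ) :
    (A ^ k).trace = ((∑ i, hA.eigenvalues i ^ k : ℝ) : ℂ) := by
  set U : Matrix n n ℂ := (hA.eigenvectorUnitary : Matrix n n ℂ)
  have hmem := hA.eigenvectorUnitary.2
  have h1 : star U * U = 1 := (Matrix.mem_unitaryGroup_iff'.mp hmem)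
  have h2 : U * star U = 1 := (Matrix.mem_unitaryGroup_iff.mp hmem)
  conv_lhs => rw [hA.spectral_theorem, Unitary.conjStarAlgAut_apply]
  rw [conj_pow_aux _ _ h1 h2, Matrix.trace_mul_comm, ← Matrix.mul_assoc, h1, Matrix.one_mul,
    Matrix.diagonal_pow, Matrix.trace_diagonal]
  push_cast
  rfl

lemma indicator_ineq (x : ℝ) :
    |(if (1/2 : ℝ) ≤ x then (1:ℝ) else 0) - (3 * x ^ 2 - 2 * x ^ 3)| ≤ 16 * (x ^ 2 - x) ^ 2 := by
  rw [abs_le]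
  split_ifs with hx
  · constructor <;> nlinarith [sq_nonneg (x - 1), sq_nonneg x, sq_nonneg (x*(x-1)), sq_nonneg (x+1)]
  · push_neg at hx
    constructor <;> nlinarith [sq_nonneg (x - 1), sq_nonneg x, sq_nonneg (x*(x-1)), sq_nonneg (x+1)]

lemma frobenius_eq {n : Type*} [Fintype n] [DecidableEq n] {B : Matrix n n ℂ}
    (hB : B.IsHermitian) :
    (B * B).trace = ((∑ i, ∑ j, ‖B i j‖ ^ 2 : ℝ) : ℂ) := by
  have hentry : ∀ i j, B j i = star (B i j) := fun i j => (hB.apply j i).symm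
  simp only [Matrix.trace, Matrix.diag, Matrix.mul_apply]
  push_cast
  rw [Finset.sum_comm]
  refine Finset.sum_congr rfl fun i _ => Finset.sum_congr rfl fun j _ => ?_
  rw [hentry i j, show star (B i j) = starRingEnd ℂ (B i j) from rfl, mul_comm,
    Complex.mul_conj']

lemma eig_sq_sum {n : Type*} [Fintype n] [DecidableEq n] {A : Matrix n n ℂ}
    (hA : A.IsHermitian) :
    ∑ i, (hA.eigenvalues i ^ 2 - hA.eigenvalues i) ^ 2
      = ∑ i, ∑ j, ‖(A ^ 2 - A) i j‖ ^ 2 := by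
  have hB : (A ^ 2 - A).IsHermitian := (hA.pow 2).sub hA
  have hBB : (A ^ 2 - A) * (A ^ 2 - A) = A ^ 4 - A ^ 3 - A ^ 3 + A ^ 2 := by noncomm_ring
  have h1 := frobenius_eq hB
  rw [hBB, Matrix.trace_add, Matrix.trace_sub, Matrix.trace_sub,
    trace_pow_eq hA 4, trace_pow_eq hA 3, trace_pow_eq hA 2] at h1
  have h2 : (∑ i, hA.eigenvalues i ^ 4 : ℝ) - (∑ i, hA.eigenvalues i ^ 3 : ℝ)
      - (∑ i, hA.eigenvalues i ^ 3 : ℝ) + (∑ i, hA.eigenvalues i ^ 2 : ℝ)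
      = ∑ i, ∑ j, ‖(A ^ 2 - A) i j‖ ^ 2 := by
    exact_mod_cast h1
  rw [← h2]
  rw [← Finset.sum_sub_distrib, ← Finset.sum_sub_distrib, ← Finset.sum_add_distrib]
  exact Finset.sum_congr rfl fun i _ => by ring

lemma master_bound {n : Type*} [Fintype n] [DecidableEq n] {A : Matrix n n ℂ}
    (hA : A.IsHermitian) :
    ‖((Finset.univ.filter fun i => (1/2 : ℝ) ≤ hA.eigenvalues i).card : ℂ) -
        (3 * Matrix.trace (A ^ 2) - 2 * Matrix.trace (A ^ 3))‖
      ≤ 16 * ∑ i, ∑ j, ‖(A ^ 2 - A) i j‖ ^ 2 := by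
  have hκ : ((Finset.univ.filter fun i => (1/2 : ℝ) ≤ hA.eigenvalues i).card : ℝ)
      = ∑ i, (if (1/2 : ℝ) ≤ hA.eigenvalues i then (1:ℝ) else 0) := by
    rw [Finset.sum_boole]
  have hrw : ((Finset.univ.filter fun i => (1/2 : ℝ) ≤ hA.eigenvalues i).card : ℂ) -
        (3 * Matrix.trace (A ^ 2) - 2 * Matrix.trace (A ^ 3))
      = ((∑ i, ((if (1/2 : ℝ) ≤ hA.eigenvalues i then (1:ℝ) else 0)
          - (3 * hA.eigenvalues i ^ 2 - 2 * hA.eigenvalues i ^ 3)) : ℝ) : ℂ) := by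
    rw [trace_pow_eq hA 2, trace_pow_eq hA 3]
    rw [Finset.sum_sub_distrib, ← hκ]
    push_cast [Finset.mul_sum, Finset.sum_sub_distrib]
    ring
  rw [hrw, Complex.norm_real, Real.norm_eq_abs]
  calc |∑ i, ((if (1/2 : ℝ) ≤ hA.eigenvalues i then (1:ℝ) else 0)
          - (3 * hA.eigenvalues i ^ 2 - 2 * hA.eigenvalues i ^ 3))|
      ≤ ∑ i, |((if (1/2 : ℝ) ≤ hA.eigenvalues i then (1:ℝ) else 0)
          - (3 * hA.eigenvalues i ^ 2 - 2 * hA.eigenvalues i ^ 3))| :=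
        Finset.abs_sum_le_sum_abs _ _
    _ ≤ ∑ i, 16 * (hA.eigenvalues i ^ 2 - hA.eigenvalues i) ^ 2 :=
        Finset.sum_le_sum fun i _ => indicator_ineq _
    _ = 16 * ∑ i, (hA.eigenvalues i ^ 2 - hA.eigenvalues i) ^ 2 := by rw [Finset.mul_sum]
    _ = 16 * ∑ i, ∑ j, ‖(A ^ 2 - A) i j‖ ^ 2 := by rw [eig_sq_sum hA]

lemma voicV_apply {N : ℕ} [NeZero N] (i j : Fin N) :
    voicV N i j = if i = j + 1 then 1 else 0 := by
  have hv : (j + 1 : Fin N).val = ((j : ℕ) + 1) % N := by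
    rw [Fin.add_def]
    simp only [Fin.val_one']
    exact Nat.add_mod_mod _ _ _
  have : ((i : ℕ) = ((j : ℕ) + 1) % N) ↔ i = j + 1 := by
    rw [Fin.ext_iff, hv]
  simp only [voicV, Matrix.of_apply, this]

lemma voicV_conjT_apply {N : ℕ} [NeZero N] (i j : Fin N) :
    (voicV N)ᴴ i j = if j = i + 1 then 1 else 0 := by
  rw [Matrix.conjTranspose_apply, voicV_apply]
  split_ifs <;> simp

lemma voicV_mul_conjT {N : ℕ} [NeZero N] : voicV N * (voicV N)ᴴ = 1 := by
  ext i j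
  rw [Matrix.mul_apply]
  simp only [voicV_apply, voicV_conjT_apply]
  rw [Finset.sum_eq_single (i - 1)]
  · simp [sub_add_cancel, Matrix.one_apply, eq_comm]
  · intro a _ ha
    rw [if_neg, zero_mul]
    intro hia
    exact ha (by rw [hia]; simp)
  · intro hmem
    exact absurd (Finset.mem_univ _) hmem

noncomputable def dmat {N : ℕ} (F : Fin N → ℝ) : Matrix (Fin N) (Fin N) ℂ :=
  Matrix.diagonal (fun k => (F k : ℂ))

lemma dmat_mul_dmat {N : ℕ} (F G : Fin N → ℝ) :
    dmat F * dmat G = dmat (fun k => F k * G k) := by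
  simp only [dmat, Matrix.diagonal_mul_diagonal]
  push_cast
  rfl

lemma dmat_comm {N : ℕ} (F G : Fin N → ℝ) : dmat F * dmat G = dmat G * dmat F := by
  rw [dmat_mul_dmat, dmat_mul_dmat]
  simp [mul_comm]

lemma loring_block_sq {N : ℕ} [NeZero N] (F G H : Fin N → ℝ)
    (hsum : ∀ k, F k ^ 2 + G k ^ 2 + H k ^ 2 = F k) (hgh : ∀ k, G k * H k = 0) :
    (Matrix.fromBlocks (dmat F) (dmat G + dmat H * voicV N)
      ((voicV N)ᴴ * dmat H + dmat G) (1 - dmat F)) ^ 2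
    - (Matrix.fromBlocks (dmat F) (dmat G + dmat H * voicV N)
      ((voicV N)ᴴ * dmat H + dmat G) (1 - dmat F))
    = Matrix.fromBlocks
        (dmat G * (voicV N)ᴴ * dmat H + dmat H * voicV N * dmat G)
        (dmat F * (dmat H * voicV N) - dmat H * voicV N * dmat F)
        ((voicV N)ᴴ * dmat H * dmat F - dmat F * ((voicV N)ᴴ * dmat H))
        ((voicV N)ᴴ * (dmat H * dmat H) * voicV N - dmat H * dmat H) := by
  set V := voicV N
  have hVV : V * Vᴴ = 1 := voicV_mul_conjT
  have hdiag : dmat F * dmat F + dmat G * dmat G + dmat H * dmat H = dmat F := by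
    rw [dmat_mul_dmat, dmat_mul_dmat, dmat_mul_dmat]
    unfold dmat
    rw [Matrix.diagonal_add, Matrix.diagonal_add]
    refine congrArg Matrix.diagonal (funext fun k => ?_)
    simp only [Pi.add_apply]
    push_cast
    norm_cast
    linear_combination hsum k
  have hgh0 : dmat G * dmat H = 0 := by
    rw [dmat_mul_dmat]
    unfold dmat
    have hz : (fun k : Fin N => ((G k * H k : ℝ) : ℂ)) = fun _ => 0 :=
      funext fun k => by rw [hgh k]; simp
    rw [hz, Matrix.diagonal_zero]
  have hhg0 : dmat H * dmat G = 0 := by rw [dmat_comm]; exact hgh0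
  rw [pow_two, Matrix.fromBlocks_multiply, sub_eq_iff_eq_add, Matrix.fromBlocks_add,
    Matrix.fromBlocks_inj]
  refine ⟨?_, ?_, ?_, ?_⟩
  · have expand : (dmat G + dmat H * V) * (Vᴴ * dmat H + dmat G)
        = dmat G * Vᴴ * dmat H + dmat G * dmat G + dmat H * (V * Vᴴ) * dmat H
          + dmat H * V * dmat G := by noncomm_ring
    rw [expand, hVV, Matrix.mul_one]
    calc dmat F * dmat F
          + (dmat G * Vᴴ * dmat H + dmat G * dmat G + dmat H * dmat H + dmat H * V * dmat G)
        = (dmat G * Vᴴ * dmat H + dmat H * V * dmat G)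
            + (dmat F * dmat F + dmat G * dmat G + dmat H * dmat H) := by abel
      _ = dmat G * Vᴴ * dmat H + dmat H * V * dmat G + dmat F := by rw [hdiag]
  · have h1 : dmat F * (dmat G + dmat H * V)
        = dmat F * dmat G + dmat F * (dmat H * V) := by noncomm_ring
    have h2 : (dmat G + dmat H * V) * (1 - dmat F)
        = dmat G + dmat H * V - (dmat G * dmat F + dmat H * V * dmat F) := by noncomm_ring
    rw [h1, h2, dmat_comm F G]
    abel
  · have h1 : (Vᴴ * dmat H + dmat G) * dmat F
        = Vᴴ * dmat H * dmat F + dmat G * dmat F := by noncomm_ring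
    have h2 : (1 - dmat F) * (Vᴴ * dmat H + dmat G)
        = Vᴴ * dmat H + dmat G - (dmat F * (Vᴴ * dmat H) + dmat F * dmat G) := by noncomm_ring
    rw [h1, h2, dmat_comm F G]
    abel
  · have expand : (Vᴴ * dmat H + dmat G) * (dmat G + dmat H * V)
        = Vᴴ * (dmat H * dmat G) + Vᴴ * (dmat H * dmat H) * V + dmat G * dmat G
          + dmat G * (dmat H * V) := by noncomm_ring
    have z1 : dmat G * (dmat H * V) = 0 := by rw [← Matrix.mul_assoc, hgh0, Matrix.zero_mul]
    have z2 : Vᴴ * (dmat H * dmat G) = 0 := by rw [hhg0, Matrix.mul_zero]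
    rw [expand, z1, z2]
    have key : dmat F * dmat F = dmat F - dmat G * dmat G - dmat H * dmat H :=
      calc dmat F * dmat F
          = (dmat F * dmat F + dmat G * dmat G + dmat H * dmat H)
              - dmat G * dmat G - dmat H * dmat H := by abel
        _ = dmat F - dmat G * dmat G - dmat H * dmat H := by rw [hdiag]
    have expand2 : (1 - dmat F) * (1 - dmat F) = 1 - dmat F - dmat F + dmat F * dmat F := by
      noncomm_ring
    rw [expand2, key]
    abel

noncomputable def sampleF (f : ℂ → ℝ) (N : ℕ) (k : Fin N) : ℝ :=
  f (Complex.exp (2 * Real.pi * Complex.I * k / N))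

lemma sample_norm_one {N : ℕ} (k : Fin N) :
    ‖Complex.exp (2 * Real.pi * Complex.I * k / N)‖ = 1 := by
  have harg : (2 * (Real.pi : ℂ) * Complex.I * k / N)
      = ((2 * Real.pi * (k : ℕ) / N : ℝ) : ℂ) * Complex.I := by
    push_cast
    ring
  rw [harg, Complex.norm_exp_ofReal_mul_I]

lemma sample_phi (f : ℂ → ℝ) {N : ℕ} (k : Fin N) :
    sampleF f N k = (fun x : ℝ => f (Complex.exp (2 * Real.pi * Complex.I * x)))
      (((k : ℕ) : ℝ) / N) := by
  unfold sampleF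
  congr 2
  push_cast
  ring

lemma sample_mem_Icc {N : ℕ} (m : ℕ) (hm : m ≤ N) :
    ((m : ℝ) / N) ∈ Set.Icc (0 : ℝ) 1 := by
  rcases Nat.eq_zero_or_pos N with hN | hN
  · subst hN; simp
  constructor
  · positivity
  · rw [div_le_one (by exact_mod_cast hN)]
    exact_mod_cast hm

lemma sample_adj {N : ℕ} [NeZero N] (f : ℂ → ℝ) (K : NNReal)
    (hL : LipschitzOnWith K (fun x : ℝ => f (Complex.exp (2 * Real.pi * Complex.I * x)))
      (Set.Icc (0 : ℝ) 1)) (k : Fin N) :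
    |sampleF f N (k + 1) - sampleF f N k| ≤ K / N := by
  set φ : ℝ → ℝ := fun x : ℝ => f (Complex.exp (2 * Real.pi * Complex.I * x)) with hφ
  have hNpos : 0 < N := Nat.pos_of_ne_zero (NeZero.ne N)
  have hNr : (0 : ℝ) < N := by exact_mod_cast hNpos
  have hval : ((k + 1 : Fin N) : ℕ) = ((k : ℕ) + 1) % N := by
    rw [Fin.add_def]
    simp only [Fin.val_one']
    exact Nat.add_mod_mod _ _ _
  have hmemk : (((k : ℕ) : ℝ) / N) ∈ Set.Icc (0 : ℝ) 1 := sample_mem_Icc _ (le_of_lt k.isLt)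
  rw [sample_phi, sample_phi, ← hφ, hval]
  by_cases hc : (k : ℕ) + 1 = N
  · rw [hc, Nat.mod_self]
    have hper : φ 0 = φ 1 := by
      have : Complex.exp (2 * Real.pi * Complex.I * (0 : ℝ))
          = Complex.exp (2 * Real.pi * Complex.I * (1 : ℝ)) := by
        norm_num [Complex.exp_two_pi_mul_I]
      simp only [hφ, this]
    have h1mem : (1 : ℝ) ∈ Set.Icc (0 : ℝ) 1 := by norm_num
    have hd := hL.dist_le_mul 1 h1mem (((k : ℕ) : ℝ) / N) hmemk
    rw [Real.dist_eq, Real.dist_eq] at hd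
    have hkval : ((k : ℕ) : ℝ) = (N : ℝ) - 1 := by
      have : ((k : ℕ) : ℝ) + 1 = N := by exact_mod_cast hc
      linarith
    have habs : |1 - ((k : ℕ) : ℝ) / N| = 1 / N := by
      rw [hkval, show (1 : ℝ) - ((N : ℝ) - 1) / N = 1 / N by field_simp; ring]
      exact _root_.abs_of_nonneg (by positivity)
    rw [habs] at hd
    calc |φ (((0 : ℕ) : ℝ) / N) - φ (((k : ℕ) : ℝ) / N)|
        = |φ 1 - φ (((k : ℕ) : ℝ) / N)| := by rw [show (((0 : ℕ) : ℝ) / N) = (0 : ℝ) by simp, hper]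
      _ ≤ K * (1 / N) := hd
      _ = K / N := by ring
  · have hlt : (k : ℕ) + 1 < N := by
      have := k.isLt
      omega
    rw [Nat.mod_eq_of_lt hlt]
    have hmem1 : ((((k : ℕ) + 1 : ℕ) : ℝ) / N) ∈ Set.Icc (0 : ℝ) 1 :=
      sample_mem_Icc _ (le_of_lt hlt)
    have hd := hL.dist_le_mul ((((k : ℕ) + 1 : ℕ) : ℝ) / N) hmem1 (((k : ℕ) : ℝ) / N) hmemk
    rw [Real.dist_eq, Real.dist_eq] at hd
    have habs : |(((k : ℕ) + 1 : ℕ) : ℝ) / N - ((k : ℕ) : ℝ) / N| = 1 / N := by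
      rw [show (((k : ℕ) + 1 : ℕ) : ℝ) / N - ((k : ℕ) : ℝ) / N = 1 / N by push_cast; field_simp; ring]
      exact _root_.abs_of_nonneg (by positivity)
    rw [habs] at hd
    calc |φ ((((k : ℕ) + 1 : ℕ) : ℝ) / N) - φ (((k : ℕ) : ℝ) / N)| ≤ K * (1 / N) := hd
      _ = K / N := by ring

lemma abs_add_sq_le (t1 t2 : ℂ) (b1 b2 : ℝ) (h1 : ‖t1‖ ≤ b1)
    (h2 : ‖t2‖ ≤ b2) :
    ‖t1 + t2‖ ^ 2 ≤ 2 * b1 ^ 2 + 2 * b2 ^ 2 := by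
  have h0 : ‖t1 + t2‖ ≤ b1 + b2 :=
    le_trans (norm_add_le _ _) (add_le_add h1 h2)
  have hnn : (0 : ℝ) ≤ ‖t1 + t2‖ := norm_nonneg _
  nlinarith [sq_nonneg (b1 - b2)]

lemma sum_sum_ite_succ {N : ℕ} [NeZero N] (c : ℝ) :
    ∑ i : Fin N, ∑ j : Fin N, (if j = i + 1 then c else 0) = N * c := by
  have : ∀ i : Fin N, ∑ j : Fin N, (if j = i + 1 then c else 0) = c := by
    intro i
    rw [Finset.sum_ite_eq' Finset.univ (i + 1) (fun _ => c), if_pos (Finset.mem_univ _)]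
  simp [this, Finset.sum_const, Finset.card_univ, mul_comm]

lemma sum_sum_ite_succ' {N : ℕ} [NeZero N] (c : ℝ) :
    ∑ i : Fin N, ∑ j : Fin N, (if i = j + 1 then c else 0) = N * c := by
  rw [Finset.sum_comm]
  exact sum_sum_ite_succ c

lemma sum_sum_ite_diag {N : ℕ} [NeZero N] (c : ℝ) :
    ∑ i : Fin N, ∑ j : Fin N, (if i = j then c else 0) = N * c := by
  have : ∀ i : Fin N, ∑ j : Fin N, (if i = j then c else 0) = c := by
    intro i
    rw [Finset.sum_ite_eq Finset.univ i (fun _ => c), if_pos (Finset.mem_univ _)]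
  simp [this, Finset.sum_const, Finset.card_univ, mul_comm]

lemma frob_sum_bound {N : ℕ} [NeZero N] (F G H : Fin N → ℝ) (Kf Kh : ℝ)
    (hKf : 0 ≤ Kf) (hKh : 0 ≤ Kh)
    (hG1 : ∀ k, |G k| ≤ 1) (hH1 : ∀ k, |H k| ≤ 1)
    (hFadj : ∀ k : Fin N, |F (k + 1) - F k| ≤ Kf / N)
    (hHadj : ∀ k : Fin N, |H (k + 1) - H k| ≤ Kh / N)
    (hgh : ∀ k, G k * H k = 0)
    (hsum : ∀ k, F k ^ 2 + G k ^ 2 + H k ^ 2 = F k) :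
    (∑ i : Fin N ⊕ Fin N, ∑ j : Fin N ⊕ Fin N,
      ‖((Matrix.fromBlocks (dmat F) (dmat G + dmat H * voicV N)
        ((voicV N)ᴴ * dmat H + dmat G) (1 - dmat F)) ^ 2
        - Matrix.fromBlocks (dmat F) (dmat G + dmat H * voicV N)
        ((voicV N)ᴴ * dmat H + dmat G) (1 - dmat F)) i j‖ ^ 2)
    ≤ (2 * Kf ^ 2 + 8 * Kh ^ 2) / N := by
  have hNpos : 0 < (N : ℝ) := by
    have := Nat.pos_of_ne_zero (NeZero.ne N)
    exact_mod_cast this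
  set V := voicV N with hV
  rw [loring_block_sq F G H hsum hgh]
  rw [Fintype.sum_sum_type]
  simp only [Fintype.sum_sum_type, Matrix.fromBlocks_apply₁₁, Matrix.fromBlocks_apply₁₂,
    Matrix.fromBlocks_apply₂₁, Matrix.fromBlocks_apply₂₂]
  rw [Finset.sum_add_distrib, Finset.sum_add_distrib]
  -- Block (1,1)
  have hB1 : ∑ i : Fin N, ∑ j : Fin N,
      ‖(dmat G * Vᴴ * dmat H + dmat H * V * dmat G) i j‖ ^ 2
      ≤ 4 * Kh ^ 2 / N := by
    have hpt : ∀ i j : Fin N,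
        ‖(dmat G * Vᴴ * dmat H + dmat H * V * dmat G) i j‖ ^ 2
        ≤ 2 * (if j = i + 1 then (Kh / N) ^ 2 else 0)
          + 2 * (if i = j + 1 then (Kh / N) ^ 2 else 0) := by
      intro i j
      have hent : (dmat G * Vᴴ * dmat H + dmat H * V * dmat G) i j
          = (if j = i + 1 then ((G i * H j : ℝ) : ℂ) else 0)
            + (if i = j + 1 then ((H i * G j : ℝ) : ℂ) else 0) := by
        simp only [Matrix.add_apply, dmat, Matrix.mul_diagonal, Matrix.diagonal_mul,
          voicV_conjT_apply, voicV_apply, hV]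
        split_ifs <;> push_cast <;> ring
      rw [hent]
      have hb1 : ‖if j = i + 1 then ((G i * H j : ℝ) : ℂ) else 0‖
          ≤ if j = i + 1 then Kh / N else 0 := by
        split_ifs with hc
        · rw [Complex.norm_real, Real.norm_eq_abs, hc]
          have : G i * H (i + 1) = G i * (H (i + 1) - H i) := by
            rw [mul_sub, hgh i, sub_zero]
          rw [this, abs_mul]
          calc |G i| * |H (i + 1) - H i| ≤ 1 * (Kh / N) :=
              mul_le_mul (hG1 i) (hHadj i) (abs_nonneg _) zero_le_one
            _ = Kh / N := one_mul _
        · simp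
      have hb2 : ‖if i = j + 1 then ((H i * G j : ℝ) : ℂ) else 0‖
          ≤ if i = j + 1 then Kh / N else 0 := by
        split_ifs with hc
        · rw [Complex.norm_real, Real.norm_eq_abs, hc]
          have : H (j + 1) * G j = (H (j + 1) - H j) * G j := by
            rw [sub_mul, mul_comm (H j) (G j), hgh j, sub_zero]
          rw [this, abs_mul]
          calc |H (j + 1) - H j| * |G j| ≤ (Kh / N) * 1 :=
              mul_le_mul (hHadj j) (hG1 j) (abs_nonneg _) (by positivity)
            _ = Kh / N := mul_one _
        · simp
      have := abs_add_sq_le _ _ _ _ hb1 hb2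
      refine le_trans this ?_
      have e1 : (if j = i + 1 then Kh / N else 0) ^ 2
          = (if j = i + 1 then (Kh / N) ^ 2 else 0) := by split_ifs <;> simp
      have e2 : (if i = j + 1 then Kh / N else 0) ^ 2
          = (if i = j + 1 then (Kh / N) ^ 2 else 0) := by split_ifs <;> simp
      rw [e1, e2]
    calc ∑ i : Fin N, ∑ j : Fin N,
        ‖(dmat G * Vᴴ * dmat H + dmat H * V * dmat G) i j‖ ^ 2
        ≤ ∑ i : Fin N, ∑ j : Fin N, (2 * (if j = i + 1 then (Kh / N) ^ 2 else 0)
          + 2 * (if i = j + 1 then (Kh / N) ^ 2 else 0)) :=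
          Finset.sum_le_sum fun i _ => Finset.sum_le_sum fun j _ => hpt i j
      _ = 4 * Kh ^ 2 / N := by
          simp only [Finset.sum_add_distrib, ← Finset.mul_sum]
          rw [sum_sum_ite_succ, sum_sum_ite_succ']
          field_simp
          ring
  -- Block (1,2)
  have hB2 : ∑ i : Fin N, ∑ j : Fin N,
      ‖(dmat F * (dmat H * V) - dmat H * V * dmat F) i j‖ ^ 2
      ≤ Kf ^ 2 / N := by
    have hpt : ∀ i j : Fin N,
        ‖(dmat F * (dmat H * V) - dmat H * V * dmat F) i j‖ ^ 2
        ≤ (if i = j + 1 then (Kf / N) ^ 2 else 0) := by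
      intro i j
      have hent : (dmat F * (dmat H * V) - dmat H * V * dmat F) i j
          = if i = j + 1 then ((H i * (F i - F j) : ℝ) : ℂ) else 0 := by
        simp only [Matrix.sub_apply, dmat, Matrix.diagonal_mul, Matrix.mul_diagonal,
          voicV_apply, hV]
        split_ifs <;> push_cast <;> ring
      rw [hent]
      split_ifs with hc
      · rw [Complex.norm_real, Real.norm_eq_abs, hc]
        have hle : |H (j + 1) * (F (j + 1) - F j)| ≤ Kf / N := by
          rw [abs_mul]
          calc |H (j + 1)| * |F (j + 1) - F j| ≤ 1 * (Kf / N) :=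
              mul_le_mul (hH1 _) (hFadj j) (abs_nonneg _) zero_le_one
            _ = Kf / N := one_mul _
        calc |H (j + 1) * (F (j + 1) - F j)| ^ 2 ≤ (Kf / N) ^ 2 :=
            pow_le_pow_left₀ (abs_nonneg _) hle 2
          _ = (Kf / N) ^ 2 := rfl
      · simp
    calc ∑ i : Fin N, ∑ j : Fin N,
        ‖(dmat F * (dmat H * V) - dmat H * V * dmat F) i j‖ ^ 2
        ≤ ∑ i : Fin N, ∑ j : Fin N, (if i = j + 1 then (Kf / N) ^ 2 else 0) :=
          Finset.sum_le_sum fun i _ => Finset.sum_le_sum fun j _ => hpt i j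
      _ = Kf ^ 2 / N := by
          rw [sum_sum_ite_succ']
          field_simp
  -- Block (2,1)
  have hB3 : ∑ i : Fin N, ∑ j : Fin N,
      ‖(Vᴴ * dmat H * dmat F - dmat F * (Vᴴ * dmat H)) i j‖ ^ 2
      ≤ Kf ^ 2 / N := by
    have hpt : ∀ i j : Fin N,
        ‖(Vᴴ * dmat H * dmat F - dmat F * (Vᴴ * dmat H)) i j‖ ^ 2
        ≤ (if j = i + 1 then (Kf / N) ^ 2 else 0) := by
      intro i j
      have hent : (Vᴴ * dmat H * dmat F - dmat F * (Vᴴ * dmat H)) i j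
          = if j = i + 1 then ((H (i + 1) * (F (i + 1) - F i) : ℝ) : ℂ) else 0 := by
        simp only [Matrix.sub_apply, dmat, Matrix.diagonal_mul, Matrix.mul_diagonal,
          voicV_conjT_apply, hV]
        split_ifs with hc
        · rw [hc]; push_cast; ring
        · push_cast; ring
      rw [hent]
      split_ifs with hc
      · rw [Complex.norm_real, Real.norm_eq_abs]
        have hle : |H (i + 1) * (F (i + 1) - F i)| ≤ Kf / N := by
          rw [abs_mul]
          calc |H (i + 1)| * |F (i + 1) - F i| ≤ 1 * (Kf / N) :=
              mul_le_mul (hH1 _) (hFadj i) (abs_nonneg _) zero_le_one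
            _ = Kf / N := one_mul _
        exact pow_le_pow_left₀ (abs_nonneg _) hle 2
      · simp
    calc ∑ i : Fin N, ∑ j : Fin N,
        ‖(Vᴴ * dmat H * dmat F - dmat F * (Vᴴ * dmat H)) i j‖ ^ 2
        ≤ ∑ i : Fin N, ∑ j : Fin N, (if j = i + 1 then (Kf / N) ^ 2 else 0) :=
          Finset.sum_le_sum fun i _ => Finset.sum_le_sum fun j _ => hpt i j
      _ = Kf ^ 2 / N := by
          rw [sum_sum_ite_succ]
          field_simp
  -- Block (2,2)
  have hB4 : ∑ i : Fin N, ∑ j : Fin N,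
      ‖(Vᴴ * (dmat H * dmat H) * V - dmat H * dmat H) i j‖ ^ 2
      ≤ 4 * Kh ^ 2 / N := by
    have hpt : ∀ i j : Fin N,
        ‖(Vᴴ * (dmat H * dmat H) * V - dmat H * dmat H) i j‖ ^ 2
        ≤ (if i = j then (2 * Kh / N) ^ 2 else 0) := by
      intro i j
      have hent : (Vᴴ * (dmat H * dmat H) * V - dmat H * dmat H) i j
          = if i = j then ((H (i + 1) * H (i + 1) - H i * H i : ℝ) : ℂ) else 0 := by
        rw [dmat_mul_dmat, Matrix.sub_apply, Matrix.mul_apply]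
        simp only [hV]
        have hterm : ∀ a : Fin N, (Vᴴ * dmat fun k => H k * H k) i a * V a j
            = if a = j + 1 then ((if a = i + 1 then (1 : ℂ) else 0) * ((H a * H a : ℝ) : ℂ))
              else 0 := by
          intro a
          simp only [dmat, hV]
          rw [Matrix.mul_diagonal, voicV_conjT_apply, voicV_apply]
          split_ifs <;> ring
        rw [Finset.sum_congr rfl fun a _ => hterm a,
          Finset.sum_ite_eq' Finset.univ (j + 1) _, if_pos (Finset.mem_univ _)]
        have hdiagapp : (dmat fun k => H k * H k) i j
            = if i = j then ((H i * H i : ℝ) : ℂ) else 0 := by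
          simp [dmat, Matrix.diagonal_apply]
        rw [hdiagapp]
        have hiff : ((j + 1 : Fin N) = i + 1) ↔ (i = j) := by
          constructor
          · intro hh; exact (add_left_inj 1).mp hh.symm
          · intro hh; rw [hh]
        split_ifs with h1 h2 h2
        · rw [(hiff.mp h1)]; push_cast; ring
        · exact absurd (hiff.mp h1) h2
        · exact absurd (hiff.mpr h2) h1
        · ring
      rw [hent]
      split_ifs with hc
      · rw [Complex.norm_real, Real.norm_eq_abs]
        have hle : |H (i + 1) * H (i + 1) - H i * H i| ≤ 2 * Kh / N := by
          have hfac : H (i + 1) * H (i + 1) - H i * H i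
              = (H (i + 1) - H i) * (H (i + 1) + H i) := by ring
          rw [hfac, abs_mul]
          have h2 : |H (i + 1) + H i| ≤ 2 :=
            le_trans (abs_add_le _ _) (by linarith [hH1 (i + 1), hH1 i])
          calc |H (i + 1) - H i| * |H (i + 1) + H i| ≤ (Kh / N) * 2 :=
              mul_le_mul (hHadj i) h2 (abs_nonneg _) (by positivity)
            _ = 2 * Kh / N := by ring
        exact pow_le_pow_left₀ (abs_nonneg _) hle 2
      · simp
    calc ∑ i : Fin N, ∑ j : Fin N,
        ‖(Vᴴ * (dmat H * dmat H) * V - dmat H * dmat H) i j‖ ^ 2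
        ≤ ∑ i : Fin N, ∑ j : Fin N, (if i = j then (2 * Kh / N) ^ 2 else 0) :=
          Finset.sum_le_sum fun i _ => Finset.sum_le_sum fun j _ => hpt i j
      _ = 4 * Kh ^ 2 / N := by
          rw [sum_sum_ite_diag]
          field_simp
          ring
  have hfin : 4 * Kh ^ 2 / (N : ℝ) + Kf ^ 2 / N + (Kf ^ 2 / N + 4 * Kh ^ 2 / N)
      = (2 * Kf ^ 2 + 8 * Kh ^ 2) / N := by ring
  linarith [hB1, hB2, hB3, hB4]

end Aux

/-- If `κ(N)` is the number of eigenvalues (with multiplicity) of the Hermitian matrix `e_N`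
in `[1/2, ∞)`, then `κ(N) - (3 tr(e_N²) - 2 tr(e_N³)) → 0` as `N → ∞`. -/
theorem loring_matrix_eigenvalue_count_vs_traces
    (f g h : ℂ → ℝ)
    (hf : ContinuousOn f (Metric.sphere (0 : ℂ) 1))
    (hg : ContinuousOn g (Metric.sphere (0 : ℂ) 1))
    (hh : ContinuousOn h (Metric.sphere (0 : ℂ) 1))
    (hrange : ∀ z : ℂ, ‖z‖ = 1 →
      f z ∈ Set.Icc (0 : ℝ) 1 ∧ g z ∈ Set.Icc (0 : ℝ) 1 ∧ h z ∈ Set.Icc (0 : ℝ) 1)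
    (hsum : ∀ z : ℂ, ‖z‖ = 1 → (f z) ^ 2 + (g z) ^ 2 + (h z) ^ 2 = f z)
    (hgh : ∀ z : ℂ, ‖z‖ = 1 → g z * h z = 0)
    (hf1 : f 1 = 1) (hg1 : g 1 = 0) (hh1 : h 1 = 0)
    (hfLip : ∃ K : NNReal,
      LipschitzOnWith K (fun x : ℝ => f (Complex.exp (2 * Real.pi * Complex.I * x)))
        (Set.Icc (0 : ℝ) 1))
    (hgLip : ∃ K : NNReal,
      LipschitzOnWith K (fun x : ℝ => g (Complex.exp (2 * Real.pi * Complex.I * x)))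
        (Set.Icc (0 : ℝ) 1))
    (hhLip : ∃ K : NNReal,
      LipschitzOnWith K (fun x : ℝ => h (Complex.exp (2 * Real.pi * Complex.I * x)))
        (Set.Icc (0 : ℝ) 1))
    (herm : ∀ N : ℕ, (loringMatrix f g h N).IsHermitian) :
    Tendsto (fun N : ℕ =>
        (((Finset.univ.filter
            fun i => (1 / 2 : ℝ) ≤ (herm N).eigenvalues i).card : ℂ) -
          (3 * Matrix.trace (loringMatrix f g h N ^ 2) -
            2 * Matrix.trace (loringMatrix f g h N ^ 3))))
      atTop (nhds 0) := by
  obtain ⟨Kf, hfL⟩ := hfLip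
  obtain ⟨Kh, hhL⟩ := hhLip
  refine squeeze_zero_norm' ?_
    (tendsto_const_div_atTop_nhds_zero_nat (16 * (2 * (Kf : ℝ) ^ 2 + 8 * (Kh : ℝ) ^ 2)))
  filter_upwards [Filter.eventually_ge_atTop 1] with N hN
  haveI : NeZero N := ⟨by omega⟩
  have hA := herm N
  refine le_trans (master_bound hA) ?_
  have hblock : loringMatrix f g h N
      = Matrix.fromBlocks (dmat (sampleF f N))
          (dmat (sampleF g N) + dmat (sampleF h N) * voicV N)
          ((voicV N).conjTranspose * dmat (sampleF h N) + dmat (sampleF g N))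
          (1 - dmat (sampleF f N)) := rfl
  have hsum' : ∀ k, sampleF f N k ^ 2 + sampleF g N k ^ 2 + sampleF h N k ^ 2
      = sampleF f N k := fun k => hsum _ (sample_norm_one k)
  have hgh' : ∀ k, sampleF g N k * sampleF h N k = 0 := fun k => hgh _ (sample_norm_one k)
  have hG1 : ∀ k, |sampleF g N k| ≤ 1 := fun k => by
    have hr : sampleF g N k ∈ Set.Icc (0 : ℝ) 1 := (hrange _ (sample_norm_one k)).2.1
    rw [abs_le]
    exact ⟨by linarith [hr.1], hr.2⟩
  have hH1 : ∀ k, |sampleF h N k| ≤ 1 := fun k => by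
    have hr : sampleF h N k ∈ Set.Icc (0 : ℝ) 1 := (hrange _ (sample_norm_one k)).2.2
    rw [abs_le]
    exact ⟨by linarith [hr.1], hr.2⟩
  have hFadj : ∀ k : Fin N, |sampleF f N (k + 1) - sampleF f N k| ≤ (Kf : ℝ) / N :=
    fun k => sample_adj f Kf hfL k
  have hHadj : ∀ k : Fin N, |sampleF h N (k + 1) - sampleF h N k| ≤ (Kh : ℝ) / N :=
    fun k => sample_adj h Kh hhL k
  have hfrob := frob_sum_bound (sampleF f N) (sampleF g N) (sampleF h N) (Kf : ℝ) (Kh : ℝ)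
    Kf.coe_nonneg Kh.coe_nonneg hG1 hH1 hFadj hHadj hgh' hsum'
  rw [hblock]
  calc (16 : ℝ) * ∑ i : Fin N ⊕ Fin N, ∑ j : Fin N ⊕ Fin N,
        ‖((Matrix.fromBlocks (dmat (sampleF f N))
          (dmat (sampleF g N) + dmat (sampleF h N) * voicV N)
          ((voicV N).conjTranspose * dmat (sampleF h N) + dmat (sampleF g N))
          (1 - dmat (sampleF f N))) ^ 2
          - Matrix.fromBlocks (dmat (sampleF f N))
          (dmat (sampleF g N) + dmat (sampleF h N) * voicV N)
          ((voicV N).conjTranspose * dmat (sampleF h N) + dmat (sampleF g N))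
          (1 - dmat (sampleF f N))) i j‖ ^ 2
      ≤ 16 * ((2 * (Kf : ℝ) ^ 2 + 8 * (Kh : ℝ) ^ 2) / N) := by
        have h16 : (0 : ℝ) ≤ 16 := by norm_num
        exact mul_le_mul_of_nonneg_left hfrob h16
    _ = 16 * (2 * (Kf : ℝ) ^ 2 + 8 * (Kh : ℝ) ^ 2) / N := by ring
end

section
/- For every t ≥ 1, the unitary operator u_t on ℓ²(ℤ) and the bilateral shift S on ℓ²(ℤ) (Sδ_n = δ_{n−1}) satisfy ‖u_t S − S u_t‖ ≤ 2π/t. In particular ‖u_t S − S u_t‖ → 0 as t → ∞. -/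
open Complex Real Filter

open Complex Real Filter

noncomputable section

local notation "H" => lp (fun _ : ℤ => ℂ) 2

/-- Lipschitz bound for the circle map. -/
lemma exp_I_lipschitz (x y : ℝ) :
    ‖Complex.exp (x * Complex.I) - Complex.exp (y * Complex.I)‖ ≤ |x - y| := by
  have h := (lipschitzWith_circleMap 0 1).dist_le_mul x y
  simpa [circleMap, Complex.dist_eq, Real.dist_eq] using h

lemma orthonormal_norm_sq_sum {ι : Type*} {E : Type*} [NormedAddCommGroup E]
    [InnerProductSpace ℂ E] {v : ι → E} (hv : Orthonormal ℂ v) (l : ι → ℂ) (s : Finset ι) :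
    ‖∑ i ∈ s, l i • v i‖ ^ 2 = ∑ i ∈ s, ‖l i‖ ^ 2 := by
  have h := hv.inner_sum l l s
  rw [← inner_self_eq_norm_sq (𝕜 := ℂ), h, map_sum]
  exact Finset.sum_congr rfl fun i _ => by
    rw [RCLike.conj_mul]
    simp [← Complex.ofReal_pow]

/-- Norm bound for a weighted-shift operator, from its action on basis vectors. -/
lemma weighted_shift_norm_le (T : H →L[ℂ] H) (C : ℝ) (hC : 0 ≤ C) (d : ℤ → ℂ)
    (hd : ∀ n, ‖d n‖ ≤ C)
    (hT : ∀ n : ℤ, T (lp.single 2 n 1) = d n • lp.single 2 (n - 1) 1) : ‖T‖ ≤ C := by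
  have honb : Orthonormal ℂ (fun n : ℤ => (lp.single 2 n 1 : H)) := by
    rw [orthonormal_iff_ite]
    intro i j
    rw [lp.inner_single_left]
    simp [lp.single_apply, eq_comm, Pi.single_apply]
  have hshift : Orthonormal ℂ (fun n : ℤ => (lp.single 2 (n - 1) 1 : H)) :=
    honb.comp (fun n => n - 1) (sub_left_injective)
  have hdense : Dense ((Submodule.span ℂ (Set.range fun n : ℤ => (lp.single 2 n 1 : H))) : Set H) := by
    intro f
    have hsum : HasSum (fun i : ℤ => (lp.single 2 i (f i) : H)) f :=
      lp.hasSum_single ENNReal.ofNat_ne_top f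
    refine mem_closure_of_tendsto hsum (Filter.Eventually.of_forall fun s => ?_)
    refine Submodule.sum_mem _ fun i _ => ?_
    have : (lp.single 2 i (f i) : H) = f i • lp.single 2 i 1 := by
      rw [← lp.single_smul, smul_eq_mul, mul_one]
    rw [this]
    exact Submodule.smul_mem _ _ (Submodule.subset_span ⟨i, rfl⟩)
  have hspan : ∀ f ∈ (Submodule.span ℂ (Set.range fun n : ℤ => (lp.single 2 n 1 : H)) : Set H),
      ‖T f‖ ≤ C * ‖f‖ := by
    intro f hf
    rw [SetLike.mem_coe, Finsupp.mem_span_range_iff_exists_finsupp] at hf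
    obtain ⟨l, rfl⟩ := hf
    rw [Finsupp.sum]
    have hTf : T (∑ i ∈ l.support, l i • (lp.single 2 i 1 : H)) =
        ∑ i ∈ l.support, (l i * d i) • (lp.single 2 (i - 1) 1 : H) := by
      rw [map_sum]
      exact Finset.sum_congr rfl fun i _ => by rw [map_smul, hT, smul_smul]
    rw [hTf]
    have h1 : ‖∑ i ∈ l.support, (l i * d i) • (lp.single 2 (i - 1) 1 : H)‖ ^ 2 =
        ∑ i ∈ l.support, ‖l i * d i‖ ^ 2 := orthonormal_norm_sq_sum hshift _ _
    have h2 : ‖∑ i ∈ l.support, l i • (lp.single 2 i 1 : H)‖ ^ 2 =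
        ∑ i ∈ l.support, ‖l i‖ ^ 2 := orthonormal_norm_sq_sum honb _ _
    have hsq : ‖∑ i ∈ l.support, (l i * d i) • (lp.single 2 (i - 1) 1 : H)‖ ^ 2 ≤
        (C * ‖∑ i ∈ l.support, l i • (lp.single 2 i 1 : H)‖) ^ 2 := by
      rw [h1, mul_pow, h2, Finset.mul_sum]
      refine Finset.sum_le_sum fun i _ => ?_
      rw [norm_mul, mul_pow]
      have hdd : ‖d i‖ ^ 2 ≤ C ^ 2 := pow_le_pow_left₀ (norm_nonneg _) (hd i) 2
      exact (mul_le_mul_of_nonneg_left hdd (by positivity)).trans_eq (mul_comm _ _)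
    have h3 := Real.sqrt_le_sqrt hsq
    rwa [Real.sqrt_sq (norm_nonneg _), Real.sqrt_sq (by positivity)] at h3
  refine T.opNorm_le_bound hC fun f => ?_
  have hclosed : IsClosed {g : H | ‖T g‖ ≤ C * ‖g‖} :=
    isClosed_le (T.continuous.norm) (continuous_const.mul continuous_norm)
  have hall : (Set.univ : Set H) ⊆ {g : H | ‖T g‖ ≤ C * ‖g‖} := by
    rw [← hdense.closure_eq]
    exact closure_minimal hspan hclosed
  exact hall (Set.mem_univ f)

end

lemma phase_bound (t : ℝ) (ht : 1 ≤ t) (n : ℤ) :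
    ‖(if 0 ≤ n - 1 ∧ ((n - 1 : ℤ) : ℝ) ≤ t then
        Complex.exp (2 * Real.pi * Complex.I * ((n - 1 : ℤ) : ℂ) / t) else 1) -
      (if 0 ≤ n ∧ (n : ℝ) ≤ t then Complex.exp (2 * Real.pi * Complex.I * n / t) else 1)‖ ≤
      2 * Real.pi / t := by
  have ht0 : (0 : ℝ) < t := lt_of_lt_of_le zero_lt_one ht
  have hrw : ∀ m : ℤ, (2 * (Real.pi : ℂ) * Complex.I * (m : ℂ) / (t : ℂ)) =
      ((2 * Real.pi * (m : ℝ) / t : ℝ) : ℂ) * Complex.I := by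
    intro m; push_cast; ring
  have h2pi : Complex.exp (((2 * Real.pi : ℝ) : ℂ) * Complex.I) = 1 := by
    rw [show ((2 * Real.pi : ℝ) : ℂ) = 2 * (Real.pi : ℂ) by push_cast; ring,
      Complex.exp_two_pi_mul_I]
  split_ifs with h1 h2 h2
  · -- both in range
    rw [hrw (n - 1), hrw n]
    refine (exp_I_lipschitz _ _).trans ?_
    have : (2 * Real.pi * (((n - 1 : ℤ) : ℝ)) / t - 2 * Real.pi * (n : ℝ) / t)
        = -(2 * Real.pi / t) := by
      push_cast
      field_simp
      ring
    rw [this, abs_neg]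
    exact le_of_eq (_root_.abs_of_nonneg (by positivity))
  · -- n - 1 in range, n not
    have h0n : (0 : ℤ) ≤ n := by omega
    have htn : t < (n : ℝ) := not_le.mp fun hh => h2 ⟨h0n, hh⟩
    rw [hrw (n - 1), ← h2pi]
    refine (exp_I_lipschitz _ _).trans ?_
    have hle : ((n - 1 : ℤ) : ℝ) ≤ t := h1.2
    have hne : (((n - 1 : ℤ) : ℝ)) = (n : ℝ) - 1 := by push_cast; ring
    rw [hne] at hle ⊢
    have hnonpos : 2 * Real.pi * ((n : ℝ) - 1) / t - 2 * Real.pi ≤ 0 := by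
      have : 2 * Real.pi * ((n : ℝ) - 1) / t ≤ 2 * Real.pi := by
        rw [div_le_iff₀ ht0]
        nlinarith [Real.pi_pos]
      linarith
    rw [abs_of_nonpos hnonpos, neg_sub]
    have heq : 2 * Real.pi - 2 * Real.pi * ((n : ℝ) - 1) / t
        = (2 * Real.pi * (t - (n : ℝ) + 1)) / t := by
      field_simp
      ring
    rw [heq, div_le_div_iff₀ ht0 ht0]
    nlinarith [mul_nonneg (mul_nonneg (mul_nonneg (by norm_num : (0:ℝ) ≤ 2) Real.pi_pos.le)
      ht0.le) (sub_nonneg.mpr htn.le)]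
  · -- n in range, n - 1 not
    have hle : ((n - 1 : ℤ) : ℝ) ≤ t := by push_cast; linarith [h2.2]
    have hn0 : n = 0 := by
      have : ¬(0 : ℤ) ≤ n - 1 := fun h => h1 ⟨h, hle⟩
      omega
    subst hn0
    simp
    positivity
  · simp
    positivity

/-- For every `t ≥ 1`, the diagonal unitary `u_t` on `ℓ²(ℤ)` (with `u_t δ_n = e^{2πin/t} δ_n`
for `0 ≤ n ≤ t` and `u_t δ_n = δ_n` otherwise) and the bilateral shift `S` (`S δ_n = δ_{n-1}`)
satisfy `‖u_t S - S u_t‖ ≤ 2π/t`; in particular `‖u_t S - S u_t‖ → 0` as `t → ∞`. -/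
theorem diagonal_almost_commutes_with_shift
    (U : ℝ → (lp (fun _ : ℤ => ℂ) 2 →L[ℂ] lp (fun _ : ℤ => ℂ) 2))
    (S : lp (fun _ : ℤ => ℂ) 2 →L[ℂ] lp (fun _ : ℤ => ℂ) 2)
    (hU : ∀ t : ℝ, 1 ≤ t → ∀ n : ℤ,
      U t (lp.single 2 n 1) =
        (if 0 ≤ n ∧ (n : ℝ) ≤ t then Complex.exp (2 * Real.pi * Complex.I * n / t) else 1) •
          lp.single 2 n 1)
    (hS : ∀ n : ℤ, S (lp.single 2 n 1) = lp.single 2 (n - 1) 1) :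
    (∀ t : ℝ, 1 ≤ t → ‖U t ∘L S - S ∘L U t‖ ≤ 2 * Real.pi / t) ∧
    Tendsto (fun t : ℝ => ‖U t ∘L S - S ∘L U t‖) atTop (nhds 0) := by
  have key : ∀ t : ℝ, 1 ≤ t → ‖U t ∘L S - S ∘L U t‖ ≤ 2 * Real.pi / t := by
    intro t ht
    have ht0 : (0 : ℝ) < t := lt_of_lt_of_le zero_lt_one ht
    set lam : ℤ → ℂ := fun m =>
      if 0 ≤ m ∧ (m : ℝ) ≤ t then Complex.exp (2 * Real.pi * Complex.I * m / t) else 1 with hlam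
    refine weighted_shift_norm_le _ _ (by positivity) (fun n => lam (n - 1) - lam n) ?_ ?_
    · intro n
      simpa [hlam] using phase_bound t ht n
    · intro n
      rw [ContinuousLinearMap.sub_apply, ContinuousLinearMap.comp_apply,
        ContinuousLinearMap.comp_apply, hS, hU t ht, hU t ht, map_smul, hS, ← sub_smul]
  refine ⟨key, ?_⟩
  have hlim : Tendsto (fun t : ℝ => 2 * Real.pi / t) atTop (nhds 0) :=
    tendsto_const_nhds.div_atTop tendsto_id
  refine squeeze_zero' ?_ ?_ hlim
  · exact Filter.Eventually.of_forall fun t => norm_nonneg _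
  · exact (eventually_ge_atTop 1).mono fun t ht => key t ht
end
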